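/- arXiv:math/9306209 — 3 statements merged into one kernel-verified Lean document; each statement's English description precedes it below -/
import Mathlib

section
/- Fix p > 1 and q ≥ 1. For every n ∈ ℕ there exists an n × n matrix a (namely a(1,j) = j^{-1/p} for j = 1,…,n and a(i,j) = 0 for i ≥ 2, on Fin n × Fin n with counting measure) such that |||a|||_{p,1} ≤ p* (where 1/p + 1/p* = 1 and |||a|||_{p,1} = sup_{E,F} (|E|^{1/p*} ∨ |F|^{1/p*})⁻¹ ∑_{(i,j)∈E×F} |a(i,j)|), while the K₁-functional of a for the couple (ℓ^{p,q}_n(ℓ^1_n), ℓ^{p,q}_n(ℓ^1_n)^⊤) is at least c (log n)^{1/q} for some constant c > 0 independent of n. -/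
open Finset

/-- The nonincreasing rearrangement of `|g|` for `g : Fin n → ℝ`. -/
noncomputable def decRearr {n : ℕ} (g : Fin n → ℝ) : Fin n → ℝ :=
  fun k => |g (Tuple.sort (fun i => |g i|) k.rev)|

/-- The Lorentz `ℓ^{p,q}` quasinorm on `Fin n` with counting measure:
`(∑_{k=1}^n (k^{1/p} g*(k))^q / k)^{1/q}`. -/
noncomputable def lorentzNorm {n : ℕ} (p q : ℝ) (g : Fin n → ℝ) : ℝ :=
  (∑ k : Fin n, (((k : ℕ) + 1 : ℝ) ^ (1 / p) * decRearr g k) ^ q / ((k : ℕ) + 1 : ℝ)) ^ (1 / q)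

/-- The `K₁`-functional of the couple `(ℓ^{p,q}_n(ℓ^1_n), ℓ^{p,q}_n(ℓ^1_n)ᵀ)`. -/
noncomputable def K1PQ (n : ℕ) (p q : ℝ) (a : Fin n × Fin n → ℝ) : ℝ :=
  sInf {x : ℝ | ∃ b c : Fin n × Fin n → ℝ, a = b + c ∧
    x = lorentzNorm p q (fun i => ∑ j : Fin n, |b (i, j)|) +
      lorentzNorm p q (fun j : Fin n => ∑ i : Fin n, |c (i, j)|)}

lemma decRearr_nonneg {n : ℕ} (g : Fin n → ℝ) (k : Fin n) : 0 ≤ decRearr g k :=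
  abs_nonneg _

lemma decRearr_antitone {n : ℕ} (g : Fin n → ℝ) : Antitone (decRearr g) := by
  intro k k' h
  have := Tuple.monotone_sort (fun i => |g i|)
  exact this (Fin.rev_le_rev.mpr h)

lemma decRearr_card_congr {n : ℕ} (g : Fin n → ℝ) (t : ℝ) :
    Fintype.card {i // t ≤ decRearr g i} = Fintype.card {i // t ≤ |g i|} := by
  apply Fintype.card_congr
  exact Equiv.subtypeEquiv ((Fin.revPerm).trans (Tuple.sort (fun i => |g i|))) (by
    intro k
    simp [decRearr, Fin.revPerm])

lemma le_decRearr {n : ℕ} (g : Fin n → ℝ) (k : Fin n) (t : ℝ)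
    (h : (k : ℕ) < Fintype.card {i // t ≤ |g i|}) : t ≤ decRearr g k := by
  rw [← decRearr_card_congr] at h
  rw [Fintype.card_subtype] at h
  exact (Tuple.lt_card_ge_iff_apply_ge_of_antitone (decRearr_antitone g)).mp h

lemma lt_card_decRearr {n : ℕ} (g : Fin n → ℝ) (k : Fin n) :
    (k : ℕ) < Fintype.card {i // decRearr g k ≤ |g i|} := by
  rw [← decRearr_card_congr, Fintype.card_subtype]
  exact (Tuple.lt_card_ge_iff_apply_ge_of_antitone (decRearr_antitone g)).mpr
    le_rfl

lemma decRearr_mono {n : ℕ} {g h : Fin n → ℝ} (hgh : ∀ i, |g i| ≤ |h i|) (k : Fin n) :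
    decRearr g k ≤ decRearr h k := by
  apply le_decRearr
  refine lt_of_lt_of_le (lt_card_decRearr g k) ?_
  apply Fintype.card_le_of_injective (fun x => ⟨x.1, x.2.trans (hgh x.1)⟩)
  intro x y hxy
  simpa [Subtype.ext_iff] using hxy

lemma decRearr_sum {n : ℕ} (g : Fin n → ℝ) : ∑ k, decRearr g k = ∑ i, |g i| := by
  have := Equiv.sum_comp ((Fin.revPerm).trans (Tuple.sort (fun i => |g i|))) (fun i => |g i|)
  rw [← this]
  apply Finset.sum_congr rfl
  intro k _
  simp [decRearr, Fin.revPerm]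

/-- The `q`-th power core of the Lorentz norm. -/
noncomputable def lSum (p q : ℝ) {n : ℕ} (g : Fin n → ℝ) : ℝ :=
  ∑ k : Fin n, (((k : ℕ) + 1 : ℝ) ^ (1 / p) * decRearr g k) ^ q / ((k : ℕ) + 1 : ℝ)

lemma lorentzNorm_eq (p q : ℝ) {n : ℕ} (g : Fin n → ℝ) :
    lorentzNorm p q g = (lSum p q g) ^ (1 / q) := rfl

lemma lSum_term_nonneg (p q : ℝ) {n : ℕ} (g : Fin n → ℝ) (k : Fin n) :
    0 ≤ (((k : ℕ) + 1 : ℝ) ^ (1 / p) * decRearr g k) ^ q / ((k : ℕ) + 1 : ℝ) := by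
  apply div_nonneg (Real.rpow_nonneg ?_ _) (by positivity)
  exact mul_nonneg (Real.rpow_nonneg (by positivity) _) (decRearr_nonneg g k)

lemma lSum_nonneg (p q : ℝ) {n : ℕ} (g : Fin n → ℝ) : 0 ≤ lSum p q g :=
  Finset.sum_nonneg fun k _ => lSum_term_nonneg p q g k

lemma lorentzNorm_nonneg (p q : ℝ) {n : ℕ} (g : Fin n → ℝ) : 0 ≤ lorentzNorm p q g :=
  Real.rpow_nonneg (lSum_nonneg p q g) _

/-- A finset witness version of `le_decRearr`. -/
lemma le_decRearr_of_finset {n : ℕ} (g : Fin n → ℝ) (k : Fin n) (t : ℝ) (S : Finset (Fin n))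
    (hS : ∀ i ∈ S, t ≤ |g i|) (hcard : (k : ℕ) < S.card) : t ≤ decRearr g k := by
  apply le_decRearr g k t
  refine lt_of_lt_of_le hcard ?_
  rw [Fintype.card_subtype]
  apply Finset.card_le_card
  intro i hi
  simp only [Finset.mem_filter, Finset.mem_univ, true_and]
  exact hS i hi

/-- `|g i| ≤ lorentzNorm p q g` for any single index. -/
lemma abs_le_lorentzNorm {n : ℕ} (p q : ℝ) (hq : 1 ≤ q) (g : Fin n → ℝ) (i : Fin n) :
    |g i| ≤ lorentzNorm p q g := by
  have hn : 0 < n := i.pos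
  set k0 : Fin n := ⟨0, hn⟩
  have h0 : |g i| ≤ decRearr g k0 := by
    apply le_decRearr_of_finset g k0 _ {i} (by simp)
    simp [k0]
  have hq0 : 0 < q := lt_of_lt_of_le one_pos hq
  have habs : 0 ≤ |g i| := abs_nonneg _
  have h1 : |g i| ^ q ≤ lSum p q g := by
    have hterm : |g i| ^ q ≤ (((k0 : ℕ) + 1 : ℝ) ^ (1 / p) * decRearr g k0) ^ q /
        ((k0 : ℕ) + 1 : ℝ) := by
      have : ((k0 : ℕ) : ℝ) = 0 := by simp [k0]
      rw [this]
      simp only [zero_add, Real.one_rpow, one_mul, div_one]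
      exact Real.rpow_le_rpow habs h0 hq0.le
    exact hterm.trans (Finset.single_le_sum (fun k _ => lSum_term_nonneg p q g k)
      (Finset.mem_univ k0))
  calc |g i| = (|g i| ^ q) ^ (1 / q) := by
        rw [← Real.rpow_mul habs, mul_one_div, div_self hq0.ne', Real.rpow_one]
    _ ≤ (lSum p q g) ^ (1 / q) := Real.rpow_le_rpow (Real.rpow_nonneg habs _) h1 (by positivity)
    _ = lorentzNorm p q g := rfl

/-- Scaled comparison of rearrangements. -/
lemma decRearr_scale_le {n : ℕ} {g h : Fin n → ℝ} {c : ℝ} (hc : 0 ≤ c)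
    (hgh : ∀ i, c * |g i| ≤ |h i|) (k : Fin n) : c * decRearr g k ≤ decRearr h k := by
  apply le_decRearr
  refine lt_of_lt_of_le (lt_card_decRearr g k) ?_
  apply Fintype.card_le_of_injective
    (fun x => ⟨x.1, le_trans (mul_le_mul_of_nonneg_left x.2 hc) (hgh x.1)⟩)
  intro x y hxy
  simpa [Subtype.ext_iff] using hxy

/-- Scaled comparison of Lorentz norms. -/
lemma lorentzNorm_scale_le {n : ℕ} (p q : ℝ) (hq : 1 ≤ q) {g h : Fin n → ℝ} {c : ℝ} (hc : 0 ≤ c)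
    (hgh : ∀ i, c * |g i| ≤ |h i|) : c * lorentzNorm p q g ≤ lorentzNorm p q h := by
  have hq0 : 0 < q := lt_of_lt_of_le one_pos hq
  have h1 : c ^ q * lSum p q g ≤ lSum p q h := by
    rw [lSum, lSum, Finset.mul_sum]
    apply Finset.sum_le_sum
    intro k _
    rw [mul_div_assoc']
    apply div_le_div_of_nonneg_right ?_ (by positivity)
    have hb : (0:ℝ) ≤ ((k : ℕ) + 1 : ℝ) ^ (1 / p) := Real.rpow_nonneg (by positivity) _
    calc c ^ q * (((k : ℕ) + 1 : ℝ) ^ (1 / p) * decRearr g k) ^ q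
        = (c * (((k : ℕ) + 1 : ℝ) ^ (1 / p) * decRearr g k)) ^ q := by
          rw [← Real.mul_rpow hc (mul_nonneg hb (decRearr_nonneg g k))]
      _ = (((k : ℕ) + 1 : ℝ) ^ (1 / p) * (c * decRearr g k)) ^ q := by ring_nf
      _ ≤ (((k : ℕ) + 1 : ℝ) ^ (1 / p) * decRearr h k) ^ q := by
          apply Real.rpow_le_rpow (mul_nonneg hb (mul_nonneg hc (decRearr_nonneg g k))) ?_ hq0.le
          exact mul_le_mul_of_nonneg_left (decRearr_scale_le hc hgh k) hb
  calc c * lorentzNorm p q g = (c ^ q * lSum p q g) ^ (1 / q) := by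
        rw [Real.mul_rpow (Real.rpow_nonneg hc _) (lSum_nonneg p q g), lorentzNorm_eq,
          ← Real.rpow_mul hc, mul_one_div, div_self hq0.ne', Real.rpow_one]
    _ ≤ (lSum p q h) ^ (1 / q) :=
        Real.rpow_le_rpow (mul_nonneg (Real.rpow_nonneg hc _) (lSum_nonneg p q g)) h1
          (by positivity)
    _ = lorentzNorm p q h := rfl

/-- The weight `j ↦ (j+1)^{-1/p}`. -/
noncomputable def vv (p : ℝ) {n : ℕ} (j : Fin n) : ℝ := ((j : ℕ) + 1 : ℝ) ^ (-(1 / p))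

lemma vv_pos (p : ℝ) {n : ℕ} (j : Fin n) : 0 < vv p j :=
  Real.rpow_pos_of_pos (by positivity) _

lemma vv_anti {p : ℝ} (hp : 1 < p) {n : ℕ} {j j' : Fin n} (h : j ≤ j') : vv p j' ≤ vv p j := by
  have h1 : ((j : ℕ) + 1 : ℝ) ≤ ((j' : ℕ) + 1 : ℝ) := by
    have := Fin.le_iff_val_le_val.mp h
    have : ((j : ℕ) : ℝ) ≤ ((j' : ℕ) : ℝ) := Nat.cast_le.mpr this
    linarith
  exact Real.rpow_le_rpow_of_nonpos (by positivity) h1 (by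
    have : (0:ℝ) < 1 / p := by positivity
    linarith)

lemma vv_strict_anti {p : ℝ} (hp : 1 < p) {n : ℕ} {j j' : Fin n} (h : j < j') :
    vv p j' < vv p j := by
  have h1 : ((j : ℕ) + 1 : ℝ) < ((j' : ℕ) + 1 : ℝ) := by
    have := Fin.lt_iff_val_lt_val.mp h
    have : ((j : ℕ) : ℝ) < ((j' : ℕ) : ℝ) := Nat.cast_lt.mpr this
    linarith
  exact Real.rpow_lt_rpow_of_neg (by positivity) h1 (by
    have : (0:ℝ) < 1 / p := by positivity
    linarith)

/-- `decRearr (vv p) = vv p`. -/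
lemma decRearr_vv {p : ℝ} (hp : 1 < p) {n : ℕ} (k : Fin n) : decRearr (vv p) k = vv p k := by
  apply le_antisymm
  · by_contra hlt
    push_neg at hlt
    have h2 := lt_card_decRearr (vv p) k
    have hsub : Fintype.card {i : Fin n // decRearr (vv p) k ≤ |vv p i|} ≤ (Finset.Iio k).card := by
      rw [Fintype.card_subtype]
      apply Finset.card_le_card
      intro i hi
      simp only [Finset.mem_filter, Finset.mem_univ, true_and] at hi
      rw [abs_of_pos (vv_pos p i)] at hi
      rw [Finset.mem_Iio]
      by_contra hik
      push_neg at hik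
      exact absurd (lt_of_lt_of_le hlt (hi.trans (vv_anti hp hik))) (lt_irrefl _)
    rw [Fin.card_Iio] at hsub
    omega
  · apply le_decRearr_of_finset (vv p) k _ (Finset.Iic k)
    · intro i hi
      rw [abs_of_pos (vv_pos p i)]
      exact vv_anti hp (Finset.mem_Iic.mp hi)
    · rw [Fin.card_Iic]
      omega

lemma lSum_vv {p : ℝ} (hp : 1 < p) (q : ℝ) {n : ℕ} :
    lSum p q (vv p (n := n)) = ∑ k : Fin n, 1 / ((k : ℕ) + 1 : ℝ) := by
  unfold lSum
  apply Finset.sum_congr rfl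
  intro k _
  rw [decRearr_vv hp, vv]
  rw [← Real.rpow_add (by positivity : (0:ℝ) < (k:ℕ)+1), add_neg_cancel, Real.rpow_zero,
    Real.one_rpow]

lemma harmonic_ge_log (n : ℕ) : Real.log n ≤ ∑ k ∈ Finset.range n, 1 / ((k : ℕ) + 1 : ℝ) := by
  have key : ∀ m : ℕ, Real.log (m + 1) ≤ ∑ k ∈ Finset.range m, 1 / ((k : ℕ) + 1 : ℝ) := by
    intro m
    induction m with
    | zero => simp
    | succ m ih =>
      rw [Finset.sum_range_succ]
      have hstep : Real.log (m + 1 + 1) - Real.log (m + 1) ≤ 1 / ((m : ℝ) + 1) := by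
        rw [← Real.log_div (by positivity) (by positivity)]
        have h2 := Real.log_le_sub_one_of_pos
          (show (0:ℝ) < ((m:ℝ)+1+1)/((m:ℝ)+1) by positivity)
        have h3 : ((m:ℝ)+1+1)/((m:ℝ)+1) - 1 = 1 / ((m:ℝ)+1) := by
          field_simp; ring
        linarith
      push_cast
      push_cast at ih
      linarith
  rcases Nat.eq_zero_or_pos n with h | h
  · simp [h]
  · have h1 : Real.log n ≤ Real.log (n + 1) := by
      apply Real.log_le_log (by exact_mod_cast h)
      linarith
    exact h1.trans (key n)

/-- Telescoping bound: `∑_{k<n} (k+1)^{-(1+α)} ≤ 1 + 1/α`. -/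
lemma sum_rpow_neg_le {α : ℝ} (hα : 0 < α) (n : ℕ) :
    ∑ k ∈ Finset.range n, ((k : ℝ) + 1) ^ (-(1 + α)) ≤ 1 + 1 / α := by
  have step : ∀ a : ℝ, 1 ≤ a → (a + 1) ^ (-(1+α)) ≤ (1/α) * (a ^ (-α) - (a+1) ^ (-α)) := by
    intro a ha
    have ha0 : 0 < a := lt_of_lt_of_le one_pos ha
    have hb0 : 0 < a + 1 := by linarith
    set A := a ^ α with hA
    set B := (a + 1) ^ α with hB
    have hApos : 0 < A := Real.rpow_pos_of_pos ha0 _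
    have hBpos : 0 < B := Real.rpow_pos_of_pos hb0 _
    have key : 1 + α / (a + 1) ≤ B / A := by
      have hBA : B / A = ((a+1)/a) ^ α := (Real.div_rpow hb0.le ha0.le α).symm
      rw [hBA]
      rcases le_or_gt 1 α with h1 | h1
      · have hbern := one_add_mul_self_le_rpow_one_add
          (le_trans (by norm_num : (-1:ℝ) ≤ 0) (by positivity : (0:ℝ) ≤ 1/a)) h1
        have heq : (1 : ℝ) + 1/a = (a+1)/a := by field_simp
        rw [heq] at hbern
        refine le_trans ?_ hbern
        have h2 : α / (a+1) ≤ α * (1/a) := by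
          rw [mul_one_div]
          exact div_le_div_of_nonneg_left hα.le ha0 (by linarith)
        linarith
      · -- α < 1 : reciprocal trick
        have hgm := Real.geom_mean_le_arith_mean2_weighted hα.le (by linarith : (0:ℝ) ≤ 1 - α)
          (le_of_lt (div_pos ha0 hb0)) zero_le_one (by ring)
        rw [Real.one_rpow, mul_one, mul_one] at hgm
        set G := (a/(a+1)) ^ α with hG
        have hGpos : 0 < G := Real.rpow_pos_of_pos (div_pos ha0 hb0) _
        have hprod : ((a+1)/a) ^ α * G = 1 := by
          rw [hG, ← Real.mul_rpow (by positivity) (by positivity)]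
          rw [show (a+1)/a * (a/(a+1)) = 1 by field_simp]
          exact Real.one_rpow α
        have hXG : ((a+1)/a) ^ α = 1 / G := eq_one_div_of_mul_eq_one_left hprod
        rw [hXG]
        have hgm2 : (a+1) * G ≤ a + 1 - α := by
          have h5 : α * (a/(a+1)) + (1-α) = (a+1-α)/(a+1) := by field_simp; ring
          rw [h5] at hgm
          calc (a+1) * G ≤ (a+1) * ((a+1-α)/(a+1)) :=
                mul_le_mul_of_nonneg_left hgm hb0.le
            _ = a + 1 - α := by field_simp
        have h7 : (a+1)/(a+1-α) ≤ 1/G := by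
          rw [div_le_div_iff₀ (by linarith) hGpos]
          linarith
        refine le_trans ?_ h7
        rw [le_div_iff₀ (by linarith : (0:ℝ) < a + 1 - α)]
        have he : (1 + α/(a+1)) * (a+1-α) = (a+1) - α^2/(a+1) := by field_simp; ring
        rw [he]
        have : (0:ℝ) ≤ α^2/(a+1) := by positivity
        linarith
    -- derive the step from `key`
    have k2 : (1 + α / (a+1)) * A ≤ B := (le_div_iff₀ hApos).mp key
    have k3 : α * A ≤ (B - A) * (a + 1) := by
      have := mul_le_mul_of_nonneg_right k2 hb0.le
      have hc : (1 + α/(a+1)) * A * (a+1) = A * (a+1) + α * A := by field_simp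
      rw [hc] at this
      nlinarith
    have e1 : (a + 1) ^ (-(1+α)) = 1 / ((a+1) * B) := by
      rw [Real.rpow_neg hb0.le, Real.rpow_add hb0, Real.rpow_one, hB]
      rw [mul_inv, one_div, mul_inv]
    have e2 : a ^ (-α) = 1 / A := by rw [Real.rpow_neg ha0.le, one_div]
    have e3 : (a+1) ^ (-α) = 1 / B := by rw [Real.rpow_neg hb0.le, one_div]
    rw [e1, e2, e3]
    have e4 : 1 / A - 1 / B = (B - A) / (A * B) := by
      field_simp
    rw [e4]
    have e5 : (1/α) * ((B - A) / (A * B)) = (B - A) / (α * (A * B)) := by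
      field_simp
    rw [e5, div_le_div_iff₀ (by positivity) (by positivity)]
    have := mul_le_mul_of_nonneg_right k3 hBpos.le
    nlinarith
  -- now the induction
  have main : ∀ m : ℕ, 1 ≤ m →
      ∑ k ∈ Finset.range m, ((k : ℝ) + 1) ^ (-(1 + α)) ≤ 1 + (1/α) * (1 - (m:ℝ) ^ (-α)) := by
    intro m hm
    induction m, hm using Nat.le_induction with
    | base =>
      simp only [Finset.range_one, Finset.sum_singleton, Nat.cast_zero, zero_add,
        Real.one_rpow, Nat.cast_one]
      norm_num
    | succ m hm ih =>
      rw [Finset.sum_range_succ]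
      have hstep := step (m : ℝ) (by exact_mod_cast hm)
      push_cast
      linarith
  rcases Nat.eq_zero_or_pos n with h | h
  · simp [h]; positivity
  · refine le_trans (main n h) ?_
    have h1 : (0:ℝ) ≤ (n:ℝ) ^ (-α) := Real.rpow_nonneg (by positivity) _
    have h2 : (0:ℝ) < 1/α := by positivity
    nlinarith

/-- `ℓ^{p,q} ≤ C ℓ¹`. -/
lemma lSum_le_l1 {p q ps : ℝ} (hp : 1 < p) (hq : 1 ≤ q) (hps : 1 / p + 1 / ps = 1) {n : ℕ}
    (g : Fin n → ℝ) : lSum p q g ≤ (1 + ps / q) * (∑ i, |g i|) ^ q := by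
  have hp0 : (0:ℝ) < 1/p := by positivity
  have hp1 : 1/p < 1 := by rw [div_lt_one (by linarith)]; linarith
  have hs0 : 0 < 1/ps := by linarith
  have hps0 : 0 < ps := by
    rcases lt_trichotomy ps 0 with h | h | h
    · exfalso; have : 1/ps < 0 := by exact div_neg_of_pos_of_neg one_pos h
      linarith
    · exfalso; rw [h] at hs0; simp at hs0
    · exact h
  have hq0 : 0 < q := lt_of_lt_of_le one_pos hq
  set α := q / ps with hα
  have hα0 : 0 < α := by positivity
  set S1 := ∑ i, |g i| with hS1
  have hS1nn : 0 ≤ S1 := Finset.sum_nonneg fun i _ => abs_nonneg _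
  have hd : ∀ k : Fin n, decRearr g k ≤ S1 / ((k : ℕ) + 1 : ℝ) := by
    intro k
    rw [le_div_iff₀ (by positivity)]
    have h1 : ((Finset.Iic k).card : ℝ) * decRearr g k ≤ ∑ i ∈ Finset.Iic k, decRearr g i := by
      rw [← nsmul_eq_mul]
      exact Finset.card_nsmul_le_sum _ _ _ fun i hi =>
        decRearr_antitone g (Finset.mem_Iic.mp hi)
    rw [Fin.card_Iic] at h1
    have h2 : ∑ i ∈ Finset.Iic k, decRearr g i ≤ ∑ i, decRearr g i :=
      Finset.sum_le_sum_of_subset_of_nonneg (Finset.subset_univ _)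
        (fun i _ _ => decRearr_nonneg g i)
    rw [decRearr_sum] at h2
    push_cast at h1
    calc decRearr g k * (((k:ℕ):ℝ) + 1) = (((k:ℕ):ℝ) + 1) * decRearr g k := by ring
      _ ≤ _ := h1.trans h2
  have hterm : ∀ k : Fin n,
      (((k : ℕ) + 1 : ℝ) ^ (1 / p) * decRearr g k) ^ q / ((k : ℕ) + 1 : ℝ) ≤
        S1 ^ q * (((k : ℕ) : ℝ) + 1) ^ (-(1 + α)) := by
    intro k
    have hk0 : (0:ℝ) < ((k:ℕ):ℝ) + 1 := by positivity
    have hb : (0:ℝ) ≤ ((k:ℕ):ℝ) + 1 := hk0.le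
    have h3 : (((k : ℕ) + 1 : ℝ) ^ (1 / p) * decRearr g k) ^ q ≤
        (((k : ℕ) + 1 : ℝ) ^ (1 / p) * (S1 / (((k:ℕ):ℝ) + 1))) ^ q := by
      apply Real.rpow_le_rpow (mul_nonneg (Real.rpow_nonneg hb _) (decRearr_nonneg g k))
        (mul_le_mul_of_nonneg_left (hd k) (Real.rpow_nonneg hb _)) hq0.le
    refine le_trans ((div_le_div_iff_of_pos_right hk0).mpr h3) ?_
    have h4 : ((k : ℕ) + 1 : ℝ) ^ (1 / p) * (S1 / (((k:ℕ):ℝ) + 1)) =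
        S1 * (((k:ℕ):ℝ) + 1) ^ (1/p - 1) := by
      rw [Real.rpow_sub hk0, Real.rpow_one]
      ring
    rw [h4, Real.mul_rpow hS1nn (Real.rpow_nonneg hb _), mul_div_assoc,
      ← Real.rpow_mul hb]
    have h5 : (((k:ℕ):ℝ) + 1) ^ ((1/p - 1) * q) / (((k:ℕ):ℝ) + 1) =
        (((k:ℕ):ℝ) + 1) ^ ((1/p - 1) * q - 1) := by
      rw [Real.rpow_sub hk0, Real.rpow_one]
    rw [h5]
    apply mul_le_mul_of_nonneg_left _ (Real.rpow_nonneg hS1nn _)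
    have hexp : (1/p - 1) * q - 1 = -(1 + α) := by
      have h6 : 1/ps = 1 - 1/p := by linarith
      have : α = q * (1/ps) := by rw [hα]; ring
      rw [this, h6]; ring
    rw [hexp]
  calc lSum p q g ≤ ∑ k : Fin n, S1 ^ q * (((k : ℕ) : ℝ) + 1) ^ (-(1 + α)) :=
        Finset.sum_le_sum fun k _ => hterm k
    _ = S1 ^ q * ∑ k ∈ Finset.range n, ((k : ℝ) + 1) ^ (-(1 + α)) := by
        rw [← Finset.mul_sum, Fin.sum_univ_eq_sum_range (fun m => ((m : ℝ) + 1) ^ (-(1 + α)))]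
    _ ≤ S1 ^ q * (1 + 1/α) := by
        apply mul_le_mul_of_nonneg_left (sum_rpow_neg_le hα0 n) (Real.rpow_nonneg hS1nn _)
    _ = (1 + ps/q) * S1 ^ q := by
        rw [hα]
        rw [one_div_div]
        ring

lemma sum_div2_le (F : ℕ → ℝ) (hF : ∀ m, 0 ≤ F m) (N : ℕ) :
    ∑ m ∈ Finset.range N, F (m / 2) ≤ 2 * ∑ m ∈ Finset.range N, F m := by
  have key : ∀ M : ℕ, ∑ m ∈ Finset.range (2 * M), F (m / 2) = 2 * ∑ m ∈ Finset.range M, F m := by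
    intro M
    induction M with
    | zero => simp
    | succ M ih =>
      have h2 : 2 * (M + 1) = (2 * M) + 1 + 1 := by ring
      rw [h2, Finset.sum_range_succ, Finset.sum_range_succ, ih, Finset.sum_range_succ]
      have e1 : (2 * M) / 2 = M := by omega
      have e2 : (2 * M + 1) / 2 = M := by omega
      rw [e1, e2]
      ring
  calc ∑ m ∈ Finset.range N, F (m / 2) ≤ ∑ m ∈ Finset.range (2 * N), F (m / 2) :=
        Finset.sum_le_sum_of_subset_of_nonneg
          (Finset.range_subset_range.mpr (by omega)) (fun m _ _ => hF _)
    _ = 2 * ∑ m ∈ Finset.range N, F m := key N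

lemma ratio_term {p q : ℝ} (hp : 1 < p) (hq : 1 ≤ q) {x y t : ℝ} (hy : 0 < y) (hyx : y ≤ x)
    (hx2 : x ≤ 2 * y) (ht : x ^ (-(1/p)) ≤ t) :
    1 / x ≤ (2:ℝ) ^ q * ((y ^ (1 / p) * t) ^ q / y) := by
  have hx0 : 0 < x := lt_of_lt_of_le hy hyx
  have hq0 : 0 < q := lt_of_lt_of_le one_pos hq
  have hp0 : 0 < p := by linarith
  have htpos : 0 < t := lt_of_lt_of_le (Real.rpow_pos_of_pos hx0 _) ht
  have h1 : (y ^ (1/p) * (x ^ (-(1/p)))) ^ q ≤ (y ^ (1/p) * t) ^ q :=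
    Real.rpow_le_rpow (mul_nonneg (Real.rpow_nonneg hy.le _) (Real.rpow_nonneg hx0.le _))
      (mul_le_mul_of_nonneg_left ht (Real.rpow_nonneg hy.le _)) hq0.le
  set r := y / x with hr
  have hr0 : 0 < r := div_pos hy hx0
  have hr1 : r ≤ 1 := (div_le_one hx0).mpr hyx
  have hrhalf : 1/2 ≤ r := by
    rw [hr, le_div_iff₀ hx0]
    linarith
  have h2 : y ^ (1/p) * (x ^ (-(1/p))) = r ^ (1/p) := by
    rw [Real.rpow_neg hx0.le, hr, Real.div_rpow hy.le hx0.le, div_eq_mul_inv]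
    rfl
  have h3 : (r ^ (1/p)) ^ q = r ^ (q / p) := by
    rw [← Real.rpow_mul hr0.le]
    congr 1
    ring
  -- goal reduces to r ≤ 2^q * r^(q/p)
  have key : r ≤ (2:ℝ) ^ q * r ^ (q / p) := by
    rcases le_or_gt (q / p) 1 with hc | hc
    · have h4 : r ^ (1:ℝ) ≤ r ^ (q/p) := Real.rpow_le_rpow_of_exponent_ge hr0 hr1 hc
      rw [Real.rpow_one] at h4
      have h5 : (1:ℝ) ≤ (2:ℝ) ^ q := Real.one_le_rpow (by norm_num) hq0.le
      nlinarith [Real.rpow_nonneg hr0.le (q/p)]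
    · have h4 : r ^ q ≤ r ^ (q/p) := by
        apply Real.rpow_le_rpow_of_exponent_ge hr0 hr1
        rw [div_le_iff₀ hp0]
        nlinarith
      have h5 : ((1:ℝ)/2) ^ q ≤ r ^ q := Real.rpow_le_rpow (by norm_num) hrhalf hq0.le
      have h6 : (2:ℝ) ^ q * ((1:ℝ)/2) ^ q = 1 := by
        rw [← Real.mul_rpow (by norm_num) (by norm_num)]
        norm_num
      calc r ≤ 1 := hr1
        _ = (2:ℝ) ^ q * ((1:ℝ)/2) ^ q := h6.symm
        _ ≤ (2:ℝ) ^ q * r ^ q := by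
            apply mul_le_mul_of_nonneg_left h5 (Real.rpow_nonneg (by norm_num) _)
        _ ≤ (2:ℝ) ^ q * r ^ (q/p) := by
            apply mul_le_mul_of_nonneg_left h4 (Real.rpow_nonneg (by norm_num) _)
  -- assemble
  have h7 : 1 / x = r / y := by
    rw [hr]; field_simp
  rw [h7]
  rw [div_le_iff₀ hy] at *
  calc r ≤ (2:ℝ) ^ q * r ^ (q/p) := key
    _ = (2:ℝ) ^ q * ((y ^ (1/p) * (x ^ (-(1/p)))) ^ q) := by rw [h2, h3]
    _ ≤ (2:ℝ) ^ q * ((y ^ (1/p) * t) ^ q) := by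
        apply mul_le_mul_of_nonneg_left h1 (Real.rpow_nonneg (by norm_num) _)
    _ = (2:ℝ) ^ q * ((y ^ (1/p) * t) ^ q / y) * y := by
        field_simp

set_option maxHeartbeats 1000000 in
/-- Splitting: the harmonic sum is controlled by the two restricted Lorentz sums. -/
lemma splitting {p q : ℝ} (hp : 1 < p) (hq : 1 ≤ q) {n : ℕ} (A : Finset (Fin n)) :
    ∑ k : Fin n, 1 / (((k:ℕ):ℝ) + 1) ≤
      (2:ℝ) ^ (q + 1) * (lSum p q (fun j => if j ∈ A then vv p j else 0) +
        lSum p q (fun j => if j ∈ A then 0 else vv p j)) := by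
  set gA : Fin n → ℝ := fun j => if j ∈ A then vv p j else 0 with hgA
  set gB : Fin n → ℝ := fun j => if j ∈ A then 0 else vv p j with hgB
  -- the combined term function on ℕ
  set F : ℕ → ℝ := fun m =>
    if h : m < n then
      (((m:ℝ) + 1) ^ (1 / p) * decRearr gA ⟨m, h⟩) ^ q / ((m:ℝ) + 1) +
      (((m:ℝ) + 1) ^ (1 / p) * decRearr gB ⟨m, h⟩) ^ q / ((m:ℝ) + 1)
    else 0 with hF
  have hFnn : ∀ m, 0 ≤ F m := by
    intro m
    rw [hF]
    dsimp only
    split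
    · next h =>
      refine add_nonneg ?_ ?_ <;>
        exact div_nonneg (Real.rpow_nonneg (mul_nonneg (Real.rpow_nonneg (by positivity) _)
          (abs_nonneg _)) _) (by positivity)
    · exact le_refl 0
  -- per-k bound
  have perk : ∀ k : Fin n, 1 / (((k:ℕ):ℝ) + 1) ≤ (2:ℝ) ^ q * F ((k:ℕ) / 2) := by
    intro k
    have hhlt : (k:ℕ) / 2 < n := lt_of_le_of_lt (Nat.div_le_self _ _) k.isLt
    set hf : Fin n := ⟨(k:ℕ)/2, hhlt⟩ with hhf
    -- cardinalities
    have hsplit : ((Finset.Iic k).filter (· ∈ A)).card +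
        ((Finset.Iic k).filter (· ∉ A)).card = (k:ℕ) + 1 := by
      rw [Finset.card_filter_add_card_filter_not, Fin.card_Iic]
    have hmax : ((k:ℕ)/2) + 1 ≤ ((Finset.Iic k).filter (· ∈ A)).card ∨
        ((k:ℕ)/2) + 1 ≤ ((Finset.Iic k).filter (· ∉ A)).card := by omega
    have hvvk : ∀ (S : Finset (Fin n)), (S ⊆ Finset.Iic k) → ∀ i ∈ S, vv p k ≤ vv p i :=
      fun S hS i hi => vv_anti hp (Finset.mem_Iic.mp (hS hi))
    have hy0 : (0:ℝ) < ((hf:ℕ):ℝ) + 1 := by positivity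
    have hyx : ((hf:ℕ):ℝ) + 1 ≤ ((k:ℕ):ℝ) + 1 := by
      have : (hf:ℕ) ≤ (k:ℕ) := Nat.div_le_self _ _
      have := Nat.cast_le (α := ℝ).mpr this
      linarith
    have hx2 : ((k:ℕ):ℝ) + 1 ≤ 2 * (((hf:ℕ):ℝ) + 1) := by
      have h1 : (k:ℕ) + 1 ≤ 2 * ((k:ℕ)/2 + 1) := by omega
      have := Nat.cast_le (α := ℝ).mpr h1
      push_cast at this
      simpa [hhf] using this
    rcases hmax with hA | hB
    · have hd : vv p k ≤ decRearr gA hf := by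
        apply le_decRearr_of_finset gA hf _ ((Finset.Iic k).filter (· ∈ A))
        · intro i hi
          have hiA : i ∈ A := (Finset.mem_filter.mp hi).2
          rw [hgA]
          simp only [hiA, if_true]
          rw [abs_of_pos (vv_pos p i)]
          exact hvvk _ (Finset.filter_subset _ _) i hi
        · show (k:ℕ)/2 < _
          omega
      have hvk : vv p k = (((k:ℕ):ℝ) + 1) ^ (-(1/p)) := rfl
      have := ratio_term hp hq hy0 hyx hx2 (hvk ▸ hd)
      refine le_trans this ?_
      apply mul_le_mul_of_nonneg_left _ (Real.rpow_nonneg (by norm_num) _)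
      rw [hF]
      dsimp only
      rw [dif_pos hhlt]
      have : (⟨(k:ℕ)/2, hhlt⟩ : Fin n) = hf := rfl
      rw [this]
      exact le_add_of_nonneg_right (div_nonneg (Real.rpow_nonneg (mul_nonneg
        (Real.rpow_nonneg (by positivity) _) (abs_nonneg _)) _) (by positivity))
    · have hd : vv p k ≤ decRearr gB hf := by
        apply le_decRearr_of_finset gB hf _ ((Finset.Iic k).filter (· ∉ A))
        · intro i hi
          have hiA : i ∉ A := (Finset.mem_filter.mp hi).2
          rw [hgB]
          simp only [hiA, if_false]
          rw [abs_of_pos (vv_pos p i)]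
          exact hvvk _ (Finset.filter_subset _ _) i hi
        · show (k:ℕ)/2 < _
          omega
      have hvk : vv p k = (((k:ℕ):ℝ) + 1) ^ (-(1/p)) := rfl
      have := ratio_term hp hq hy0 hyx hx2 (hvk ▸ hd)
      refine le_trans this ?_
      apply mul_le_mul_of_nonneg_left _ (Real.rpow_nonneg (by norm_num) _)
      rw [hF]
      dsimp only
      rw [dif_pos hhlt]
      have : (⟨(k:ℕ)/2, hhlt⟩ : Fin n) = hf := rfl
      rw [this]
      exact le_add_of_nonneg_left (div_nonneg (Real.rpow_nonneg (mul_nonneg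
        (Real.rpow_nonneg (by positivity) _) (abs_nonneg _)) _) (by positivity))
  -- sum up
  have hsum1 : ∑ k : Fin n, 1 / (((k:ℕ):ℝ) + 1) ≤
      (2:ℝ) ^ q * ∑ m ∈ Finset.range n, F (m / 2) := by
    rw [Finset.mul_sum]
    rw [← Fin.sum_univ_eq_sum_range (fun m => (2:ℝ) ^ q * F (m / 2)) n]
    exact Finset.sum_le_sum fun k _ => perk k
  have hsum2 : ∑ m ∈ Finset.range n, F m = lSum p q gA + lSum p q gB := by
    rw [← Fin.sum_univ_eq_sum_range F n]
    rw [lSum, lSum, ← Finset.sum_add_distrib]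
    apply Finset.sum_congr rfl
    intro k _
    rw [hF]
    dsimp only
    rw [dif_pos k.isLt]
  calc ∑ k : Fin n, 1 / (((k:ℕ):ℝ) + 1) ≤ (2:ℝ) ^ q * ∑ m ∈ Finset.range n, F (m / 2) :=
        hsum1
    _ ≤ (2:ℝ) ^ q * (2 * ∑ m ∈ Finset.range n, F m) := by
        apply mul_le_mul_of_nonneg_left (sum_div2_le F hFnn n)
          (Real.rpow_nonneg (by norm_num) _)
    _ = (2:ℝ) ^ (q + 1) * (lSum p q gA + lSum p q gB) := by
        rw [hsum2, Real.rpow_add (by norm_num), Real.rpow_one]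
        ring

lemma strictMono_fin_nat_le {M : ℕ} (f : Fin M → ℕ) (hf : StrictMono f) :
    ∀ v : ℕ, ∀ h : v < M, v ≤ f ⟨v, h⟩ := by
  intro v
  induction v with
  | zero => intro h; exact Nat.zero_le _
  | succ v ih =>
    intro h
    have h1 : v < M := lt_trans (Nat.lt_succ_self v) h
    have h2 : f ⟨v, h1⟩ < f ⟨v+1, h⟩ := hf (by simp [Fin.lt_iff_val_lt_val])
    have := ih h1
    omega

lemma sum_finset_vv_le {p : ℝ} (hp : 1 < p) {n : ℕ} (F : Finset (Fin n)) :
    ∑ j ∈ F, vv p j ≤ ∑ m ∈ Finset.range F.card, ((m : ℝ) + 1) ^ (-(1/p)) := by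
  classical
  set e := F.orderIsoOfFin rfl with he
  have h1 : ∑ j ∈ F, vv p j = ∑ m : Fin F.card, vv p (e m : Fin n) := by
    rw [← Finset.sum_coe_sort F (vv p)]
    exact (Equiv.sum_comp e.toEquiv (fun x : F => vv p (x : Fin n))).symm
  rw [h1, ← Fin.sum_univ_eq_sum_range (fun m => ((m : ℝ) + 1) ^ (-(1/p))) F.card]
  apply Finset.sum_le_sum
  intro m _
  have hsm : StrictMono (fun m : Fin F.card => ((e m : Fin n) : ℕ)) := by
    intro a b hab
    exact Fin.lt_iff_val_lt_val.mp (e.strictMono hab)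
  have h2 : (m : ℕ) ≤ ((e m : Fin n) : ℕ) := by
    have := strictMono_fin_nat_le _ hsm (m : ℕ) m.isLt
    simpa using this
  unfold vv
  apply Real.rpow_le_rpow_of_nonpos (by positivity)
  · have : ((m:ℕ):ℝ) ≤ (((e m : Fin n) : ℕ):ℝ) := Nat.cast_le.mpr h2
    linarith
  · have : (0:ℝ) < 1/p := by positivity
    linarith

lemma sum_range_vv_le {p ps : ℝ} (hp : 1 < p) (hps : 1 / p + 1 / ps = 1) (M : ℕ) :
    ∑ m ∈ Finset.range M, ((m : ℝ) + 1) ^ (-(1/p)) ≤ ps * (M : ℝ) ^ (1/ps) := by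
  have hp0 : (0:ℝ) < 1/p := by positivity
  have hp1 : 1/p < 1 := by rw [div_lt_one (by linarith)]; linarith
  have hs0 : 0 < 1/ps := by linarith
  have hps0 : 0 < ps := by
    rcases lt_trichotomy ps 0 with h | h | h
    · exfalso; have : 1/ps < 0 := div_neg_of_pos_of_neg one_pos h
      linarith
    · exfalso; rw [h] at hs0; simp at hs0
    · exact h
  set s := 1/ps with hs
  have hpss : ps * s = 1 := by
    rw [hs]; field_simp
  have hsp : -(1/p) = s - 1 := by rw [hs]; linarith
  induction M with
  | zero =>
    simp only [Finset.range_zero, Finset.sum_empty, Nat.cast_zero]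
    rw [Real.zero_rpow hs0.ne', mul_zero]
  | succ M ih =>
    rw [Finset.sum_range_succ]
    have hb0 : (0:ℝ) < (M:ℝ) + 1 := by positivity
    -- step : ((M:ℝ)+1)^(s-1) ≤ ps * (((M:ℝ)+1)^s - (M:ℝ)^s)
    have hstep : ((M:ℝ)+1) ^ (-(1/p)) ≤ ps * (((M:ℝ)+1) ^ s - (M:ℝ) ^ s) := by
      set b := (M:ℝ) + 1 with hb
      have hM0 : (0:ℝ) ≤ (M:ℝ) := Nat.cast_nonneg M
      have hx01 : 0 ≤ (M:ℝ)/b := by positivity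
      have hgm := Real.geom_mean_le_arith_mean2_weighted hs0.le (by linarith : (0:ℝ) ≤ 1 - s)
        hx01 zero_le_one (by ring)
      rw [Real.one_rpow, mul_one, mul_one] at hgm
      -- (M/b)^s * b^s = M^s
      have hmul : ((M:ℝ)/b) ^ s * b ^ s = (M:ℝ) ^ s := by
        rw [← Real.mul_rpow hx01 hb0.le, div_mul_cancel₀ _ hb0.ne']
      have hbs : (0:ℝ) < b ^ s := Real.rpow_pos_of_pos hb0 _
      have h8 : (M:ℝ) ^ s ≤ (s * ((M:ℝ)/b) + (1 - s)) * b ^ s := by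
        rw [← hmul]
        exact mul_le_mul_of_nonneg_right hgm hbs.le
      have h9 : b ^ s - (M:ℝ) ^ s ≥ s * (1 - (M:ℝ)/b) * b ^ s := by nlinarith
      have h10 : 1 - (M:ℝ)/b = 1/b := by
        rw [hb]; field_simp; ring
      rw [h10] at h9
      have h11 : s * (1/b) * b ^ s = s * b ^ (s - 1) := by
        rw [Real.rpow_sub hb0, Real.rpow_one]
        field_simp
      rw [h11] at h9
      have h12 : ps * (b ^ s - (M:ℝ) ^ s) ≥ ps * (s * b ^ (s-1)) :=
        mul_le_mul_of_nonneg_left h9 hps0.le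
      rw [← mul_assoc, hpss, one_mul] at h12
      rw [hsp]
      exact h12
    have hmono : ps * ((M:ℝ)) ^ s + ps * (((M:ℝ)+1) ^ s - (M:ℝ) ^ s) =
        ps * (((M:ℝ)+1)) ^ s := by ring
    push_cast
    have hihc := ih
    nlinarith [hstep, hihc]

set_option maxHeartbeats 2000000 in
/-- Remark 2.4: for the matrix `a(1,j) = j^{-1/p}` (first row),
`a(i,j) = 0` otherwise, one has `|||a|||_{p,1} ≤ p*` while the `K₁`-functional for
the `ℓ^{p,q}`-valued couple is at least `c (log n)^{1/q}`; hence no dimension-free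
upper bound of `K` by `|||·|||_{p,t}` exists for `q < ∞`. -/
theorem no_uniform_upper_bound_for_lorentz_q (p q ps : ℝ) (hp : 1 < p) (hq : 1 ≤ q)
    (hps : 1 / p + 1 / ps = 1) :
    ∃ c : ℝ, 0 < c ∧ ∀ n : ℕ, 0 < n →
      ∃ a : Fin n × Fin n → ℝ,
        (a = fun z => if (z.1 : ℕ) = 0 then (((z.2 : ℕ) + 1 : ℝ)) ^ (-(1 / p)) else 0) ∧
        (∀ (E F : Finset (Fin n)), E.Nonempty → F.Nonempty →
          (max ((E.card : ℝ) ^ (1 / ps)) ((F.card : ℝ) ^ (1 / ps)))⁻¹ *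
            ∑ i ∈ E, ∑ j ∈ F, |a (i, j)| ≤ ps) ∧
        c * (Real.log n) ^ (1 / q) ≤ K1PQ n p q a := by
  have hp0 : (0:ℝ) < 1/p := by positivity
  have hp1 : 1/p < 1 := by rw [div_lt_one (by linarith)]; linarith
  have hs0 : 0 < 1/ps := by linarith
  have hps0 : 0 < ps := by
    rcases lt_trichotomy ps 0 with h | h | h
    · exfalso; have : 1/ps < 0 := div_neg_of_pos_of_neg one_pos h
      linarith
    · exfalso; rw [h] at hs0; simp at hs0
    · exact h
  have hq0 : 0 < q := lt_of_lt_of_le one_pos hq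
  set C2 : ℝ := 1 + ps/q with hC2
  have hC2pos : (0:ℝ) < C2 := by rw [hC2]; positivity
  have hC2ge1 : (1:ℝ) ≤ C2 := by rw [hC2]; nlinarith [div_pos hps0 hq0]
  set D : ℝ := (2:ℝ) ^ (q+2) * C2 with hD
  have h2q2 : (0:ℝ) < (2:ℝ) ^ (q+2) := Real.rpow_pos_of_pos (by norm_num) _
  have hDpos : (0:ℝ) < D := by rw [hD]; positivity
  refine ⟨(1/2) * D ^ (-(1/q)), by positivity, ?_⟩
  intro n hn
  set aa : Fin n × Fin n → ℝ :=
    fun z => if (z.1 : ℕ) = 0 then (((z.2 : ℕ) + 1 : ℝ)) ^ (-(1 / p)) else 0 with haa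
  refine ⟨aa, rfl, ?_, ?_⟩
  · -- Part 1 : the triple norm bound
    intro E F hE hF
    have hFc : (1:ℝ) ≤ (F.card : ℝ) := by
      have := Finset.card_pos.mpr hF
      exact_mod_cast this
    have hFr : (1:ℝ) ≤ (F.card : ℝ) ^ (1/ps) := Real.one_le_rpow hFc hs0.le
    set MX := max ((E.card : ℝ) ^ (1 / ps)) ((F.card : ℝ) ^ (1 / ps)) with hMX
    have hMXpos : (0:ℝ) < MX := lt_of_lt_of_le one_pos (le_trans hFr (le_max_right _ _))
    rw [inv_mul_le_iff₀ hMXpos]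
    have hsum : ∑ i ∈ E, ∑ j ∈ F, |aa (i, j)| ≤ ∑ j ∈ F, vv p j := by
      have hTnn : 0 ≤ ∑ j ∈ F, vv p j :=
        Finset.sum_nonneg fun j _ => (vv_pos p j).le
      have hinner : ∀ i ∈ E, ∑ j ∈ F, |aa (i, j)| =
          if (i:ℕ) = 0 then ∑ j ∈ F, vv p j else 0 := by
        intro i _
        by_cases h : (i:ℕ) = 0
        · rw [if_pos h]
          apply Finset.sum_congr rfl
          intro j _
          rw [haa]
          simp only [h, if_pos]
          exact abs_of_pos (vv_pos p j)
        · rw [if_neg h]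
          apply Finset.sum_eq_zero
          intro j _
          rw [haa]
          simp [h]
      rw [Finset.sum_congr rfl hinner]
      calc ∑ i ∈ E, (if (i:ℕ) = 0 then ∑ j ∈ F, vv p j else 0)
          ≤ ∑ i : Fin n, (if (i:ℕ) = 0 then ∑ j ∈ F, vv p j else 0) :=
            Finset.sum_le_sum_of_subset_of_nonneg (Finset.subset_univ E)
              (fun i _ _ => by positivity)
        _ = ∑ i : Fin n, (if i = (⟨0, hn⟩ : Fin n) then ∑ j ∈ F, vv p j else 0) := by
            apply Finset.sum_congr rfl
            intro i _
            congr 1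
            simp [Fin.ext_iff]
        _ = ∑ j ∈ F, vv p j := by
            rw [Finset.sum_ite_eq' Finset.univ (⟨0, hn⟩ : Fin n)]
            simp
    calc ∑ i ∈ E, ∑ j ∈ F, |aa (i, j)| ≤ ∑ j ∈ F, vv p j := hsum
      _ ≤ ps * (F.card : ℝ) ^ (1/ps) :=
          le_trans (sum_finset_vv_le hp F) (sum_range_vv_le hp hps F.card)
      _ ≤ ps * MX := mul_le_mul_of_nonneg_left (le_max_right _ _) hps0.le
      _ = MX * ps := mul_comm _ _
  · -- Part 2 : lower bound on the K-functional
    have hlogn : (0:ℝ) ≤ Real.log n := Real.log_nonneg (by exact_mod_cast hn)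
    set H : ℝ := ∑ k : Fin n, 1 / (((k:ℕ):ℝ) + 1) with hH
    have hHnn : 0 ≤ H := Finset.sum_nonneg fun k _ => by positivity
    have hHlog : Real.log n ≤ H := by
      rw [hH]
      refine le_trans (harmonic_ge_log n) (le_of_eq ?_)
      rw [← Fin.sum_univ_eq_sum_range (fun k => 1 / ((k:ℝ) + 1)) n]
    have hbound : (1/2) * D ^ (-(1/q)) * (Real.log n) ^ (1/q) ≤ (1/2) * (H / D) ^ (1/q) := by
      have e1 : D ^ (-(1/q)) * (Real.log n) ^ (1/q) = (Real.log n / D) ^ (1/q) := by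
        rw [Real.div_rpow hlogn hDpos.le, Real.rpow_neg hDpos.le, div_eq_mul_inv, mul_comm]
        rfl
      rw [mul_assoc, e1]
      apply mul_le_mul_of_nonneg_left _ (by norm_num)
      apply Real.rpow_le_rpow (by positivity)
        (div_le_div_of_nonneg_right hHlog hDpos.le) (by positivity)
    refine le_trans hbound ?_
    apply le_csInf
    · refine ⟨lorentzNorm p q (fun i => ∑ j : Fin n, |aa (i, j)|) +
        lorentzNorm p q (fun j : Fin n => ∑ i : Fin n, |(0 : Fin n × Fin n → ℝ) (i, j)|),
        aa, 0, (add_zero aa).symm, rfl⟩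
    · rintro x ⟨b, cc, hbc, hxeq⟩
      set z0 : Fin n := ⟨0, hn⟩ with hz0
      set S : ℝ := ∑ j : Fin n, |b (z0, j)| with hS
      have hSnn : 0 ≤ S := Finset.sum_nonneg fun j _ => abs_nonneg _
      set gb : Fin n → ℝ := fun i => ∑ j : Fin n, |b (i, j)| with hgb
      set gc : Fin n → ℝ := fun j => ∑ i : Fin n, |cc (i, j)| with hgc
      have hT1 : S ≤ lorentzNorm p q gb := by
        have := abs_le_lorentzNorm p q hq gb z0
        rwa [abs_of_nonneg (Finset.sum_nonneg fun j _ => abs_nonneg _)] at this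
      set A : Finset (Fin n) := Finset.univ.filter (fun j => vv p j ≤ 2 * |b (z0, j)|) with hA
      set gA : Fin n → ℝ := fun j => if j ∈ A then vv p j else 0 with hgA
      set gB : Fin n → ℝ := fun j => if j ∈ A then 0 else vv p j with hgB
      have hvb : ∀ j : Fin n, vv p j = b (z0, j) + cc (z0, j) := by
        intro j
        have := congrFun hbc (z0, j)
        rw [haa] at this
        simp only [Pi.add_apply] at this
        rw [← this]
        simp [hz0, vv]
      have f1 : ∑ i, |gA i| ≤ 2 * S := by
        have : ∀ i : Fin n, |gA i| ≤ 2 * |b (z0, i)| := by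
          intro i
          simp only [hgA]
          by_cases h : i ∈ A
          · rw [if_pos h, abs_of_pos (vv_pos p i)]
            exact (Finset.mem_filter.mp h).2
          · rw [if_neg h, abs_zero]
            positivity
        refine le_trans (Finset.sum_le_sum fun i _ => this i) ?_
        rw [← Finset.mul_sum]
      have f2 : ∀ j : Fin n, (1/2) * |gB j| ≤ |gc j| := by
        intro j
        simp only [hgB]
        by_cases h : j ∈ A
        · rw [if_pos h, abs_zero, mul_zero]
          exact abs_nonneg _
        · rw [if_neg h]
          have hb2 : ¬ (vv p j ≤ 2 * |b (z0, j)|) := by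
            intro hcon
            exact h (Finset.mem_filter.mpr ⟨Finset.mem_univ j, hcon⟩)
          push_neg at hb2
          have hcc : vv p j - |b (z0, j)| ≤ |cc (z0, j)| := by
            have := hvb j
            have h4 : |b (z0, j) + cc (z0, j)| ≤ |b (z0, j)| + |cc (z0, j)| := abs_add_le _ _
            rw [← this] at h4
            rw [abs_of_pos (vv_pos p j)] at h4
            linarith
          have hgcj : |cc (z0, j)| ≤ gc j := by
            rw [hgc]
            exact Finset.single_le_sum (fun i _ => abs_nonneg (cc (i, j)))
              (Finset.mem_univ z0)
          have hgcnn : 0 ≤ gc j := Finset.sum_nonneg fun i _ => abs_nonneg _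
          rw [abs_of_nonneg hgcnn, abs_of_pos (vv_pos p j)]
          linarith
      have hT2 : (1/2) * lorentzNorm p q gB ≤ lorentzNorm p q gc :=
        lorentzNorm_scale_le p q hq (by norm_num) f2
      have hsplit := splitting (q := q) hp hq A
      have hlA : lSum p q gA ≤ C2 * (2*S) ^ q := by
        refine le_trans (lSum_le_l1 hp hq hps gA) ?_
        rw [hC2]
        apply mul_le_mul_of_nonneg_left _ (by positivity)
        exact Real.rpow_le_rpow (Finset.sum_nonneg fun i _ => abs_nonneg _) f1 hq0.le
      have hfinal : (1/2) * (H / D) ^ (1/q) ≤ x := by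
        rcases le_or_gt (lSum p q gB) (H / (2:ℝ)^(q+2)) with hcase | hcase
        · -- then gA is large, so S is large
          have h5 : H / (2:ℝ)^(q+1) ≤ lSum p q gA + lSum p q gB := by
            rw [div_le_iff₀ (Real.rpow_pos_of_pos (by norm_num) _)]
            calc H ≤ (2:ℝ)^(q+1) * (lSum p q gA + lSum p q gB) := hsplit
              _ = (lSum p q gA + lSum p q gB) * (2:ℝ)^(q+1) := mul_comm _ _
          have h6 : H / (2:ℝ)^(q+2) ≤ lSum p q gA := by
            have he : H / (2:ℝ)^(q+1) - H / (2:ℝ)^(q+2) = H / (2:ℝ)^(q+2) := by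
              rw [Real.rpow_add (by norm_num : (0:ℝ) < 2) q 1,
                Real.rpow_add (by norm_num : (0:ℝ) < 2) q 2]
              norm_num
              field_simp
              ring
            linarith
          have h7 : H / D ≤ (2*S) ^ q := by
            rw [hD]
            rw [div_le_iff₀ (by positivity)]
            have h8 : H / (2:ℝ)^(q+2) ≤ C2 * (2*S)^q := le_trans h6 hlA
            rw [div_le_iff₀ h2q2] at h8
            nlinarith [Real.rpow_pos_of_pos (by norm_num : (0:ℝ) < 2) (q+2)]
          have h9 : (H / D) ^ (1/q) ≤ 2 * S := by
            calc (H / D) ^ (1/q) ≤ ((2*S) ^ q) ^ (1/q) :=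
                  Real.rpow_le_rpow (by positivity) h7 (by positivity)
              _ = 2 * S := by
                  rw [← Real.rpow_mul (by positivity), mul_one_div, div_self hq0.ne',
                    Real.rpow_one]
          rw [hxeq]
          have : (1/2) * (H/D) ^ (1/q) ≤ S := by linarith
          refine le_trans this (le_trans hT1 ?_)
          exact le_add_of_nonneg_right (lorentzNorm_nonneg p q _)
        · -- gB is large
          have hDge : (2:ℝ)^(q+2) ≤ D := by
            rw [hD]; nlinarith
          have h5 : H / D ≤ lSum p q gB := by
            refine le_trans ?_ hcase.le
            gcongr
          have h7 : (H/D) ^ (1/q) ≤ (lSum p q gB) ^ (1/q) :=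
            Real.rpow_le_rpow (by positivity) h5 (by positivity)
          have h8 : (1/2) * (H/D) ^ (1/q) ≤ (1/2) * lorentzNorm p q gB := by
            rw [lorentzNorm_eq]
            linarith
          rw [hxeq]
          have hnn := lorentzNorm_nonneg p q gb
          linarith [le_trans h8 hT2]
      exact hfinal
end

section
/- Let M = Fin m, N = Fin n with positive weights, and t > 0. Let B₀ = B(ℓ^∞_n(ν), ℓ^∞_m(μ)) and B₁ = B(ℓ^1_n(ν), ℓ^1_m(μ)), identified with m × n matrices via kernels: u(f)(i) = ∑_j k(i,j) f(j) ν_j. Then for any matrix kernel k: (1/2) K_t(u; B₀, B₁) ≤ sup_{E,F} (μ(E) ∨ t⁻¹ν(F))⁻¹ ∑_{(i,j)∈E×F} |k(i,j)| μ_i ν_j ≤ K_t(u; B₀, B₁), where the operator norm of u : ℓ^∞_n → ℓ^∞_m equals max_i ∑_j |k(i,j)| ν_j and the norm of u : ℓ^1_n(ν) → ℓ^1_m(μ) equals max_j ∑_i |k(i,j)| μ_i. -/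
open Finset

/-- The operator with kernel `k`: `(u f)(i) = ∑_j k(i,j) f(j) ν_j`. -/
noncomputable def kernelOp {m n : ℕ} (ν : Fin n → ℝ) (k : Fin m × Fin n → ℝ)
    (f : Fin n → ℝ) : Fin m → ℝ :=
  fun i => ∑ j : Fin n, k (i, j) * f j * ν j

lemma max_conv' {a b b' d s : ℝ} (h : a + d = b + b') (hab : a ≤ b) (hab' : a ≤ b')
    (hbd : b ≤ d) (hbd' : b' ≤ d) :
    max (b - s) 0 + max (b' - s) 0 ≤ max (a - s) 0 + max (d - s) 0 := by
  rcases max_cases (a - s) 0 with ⟨h1, h1'⟩ | ⟨h1, h1'⟩ <;>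
    rcases max_cases (d - s) 0 with ⟨h2, h2'⟩ | ⟨h2, h2'⟩ <;>
    rcases max_cases (b - s) 0 with ⟨h3, h3'⟩ | ⟨h3, h3'⟩ <;>
    rcases max_cases (b' - s) 0 with ⟨h4, h4'⟩ | ⟨h4, h4'⟩ <;>
    rw [h1, h2, h3, h4] <;> linarith

lemma submodular_feasible {ι : Type*} [DecidableEq ι] (S : Finset ι)
    (cap : ι → ℝ) (hcap : ∀ i, 0 ≤ cap i) :
    ∀ (g : Finset ι → ℝ) (s₀ : ℝ),
    g ∅ = 0 →
    (∀ E, E ⊆ S → ∀ E', E' ⊆ S → g (E ∪ E') + g (E ∩ E') ≤ g E + g E') →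
    (∀ E, E ⊆ S → 0 ≤ g E) →
    (∀ E, E ⊆ S → ∑ i ∈ E, cap i - s₀ ≤ g E) →
    ∃ x : ι → ℝ, (∀ i, 0 ≤ x i ∧ x i ≤ cap i) ∧
      (∀ E, E ⊆ S → ∑ i ∈ E, x i ≤ g E) ∧
      ∑ i ∈ S, cap i - s₀ ≤ ∑ i ∈ S, x i := by
  induction S using Finset.induction with
  | empty =>
    intro g s₀ hg0 _ _ hlow
    refine ⟨fun _ => 0, fun i => ⟨le_refl _, hcap i⟩, ?_, ?_⟩
    · intro E hE
      rw [Finset.subset_empty.mp hE]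
      simp [hg0]
    · have := hlow ∅ (Finset.Subset.refl _)
      rw [hg0] at this
      simpa using this
  | @insert i₀ S' hi₀ IH =>
    intro g s₀ hg0 hsub hpos hlow
    have hne : (S'.powerset).Nonempty := ⟨∅, by simp⟩
    set infv : ℝ := (S'.powerset).inf' hne (fun E => g (insert i₀ E)) with hinf
    have hinf_le : ∀ E, E ⊆ S' → infv ≤ g (insert i₀ E) := by
      intro E hE
      exact Finset.inf'_le _ (Finset.mem_powerset.mpr hE)
    set c : ℝ := min (cap i₀) infv with hc
    have hsubS : ∀ E : Finset ι, E ⊆ S' → E ⊆ insert i₀ S' :=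
      fun E hE => hE.trans (Finset.subset_insert _ _)
    have hinsS : ∀ E : Finset ι, E ⊆ S' → insert i₀ E ⊆ insert i₀ S' :=
      fun E hE => Finset.insert_subset_insert _ hE
    have hc_nonneg : 0 ≤ c :=
      le_min (hcap i₀) (Finset.le_inf' hne _ fun E hE =>
        hpos _ (hinsS E (Finset.mem_powerset.mp hE)))
    have hc_cap : c ≤ cap i₀ := min_le_left _ _
    have hc_inf : c ≤ infv := min_le_right _ _
    have hkey : ∀ E, E ⊆ S' → ∑ i ∈ E, cap i + cap i₀ - s₀ - c ≤ g E := by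
      intro E hE
      rcases le_total (cap i₀) infv with hcase | hcase
      · have hceq : c = cap i₀ := min_eq_left hcase
        have := hlow E (hsubS E hE)
        rw [hceq]; linarith
      · have hceq : c = infv := min_eq_right hcase
        obtain ⟨E', hE'mem, hE'eq⟩ := Finset.exists_mem_eq_inf' hne (fun E => g (insert i₀ E))
        rw [Finset.mem_powerset] at hE'mem
        have hsm := hsub E (hsubS E hE) (insert i₀ E') (hinsS E' hE'mem)
        have hiE : i₀ ∉ E := fun h => hi₀ (hE h)
        have hEu : E ∪ insert i₀ E' = insert i₀ (E ∪ E') := by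
          ext x; simp only [Finset.mem_insert, Finset.mem_union]; tauto
        have hEi : E ∩ insert i₀ E' = E ∩ E' := by
          ext x; simp only [Finset.mem_inter, Finset.mem_insert]
          constructor
          · rintro ⟨hx, hx' | hx'⟩
            · exact absurd (by rwa [hx'] at hx) hiE
            · exact ⟨hx, hx'⟩
          · rintro ⟨hx, hx'⟩; exact ⟨hx, Or.inr hx'⟩
        rw [hEu, hEi] at hsm
        have h1 : 0 ≤ g (E ∩ E') :=
          hpos _ ((Finset.inter_subset_left.trans hE).trans (Finset.subset_insert _ _))
        have h2 : ∑ i ∈ insert i₀ (E ∪ E'), cap i - s₀ ≤ g (insert i₀ (E ∪ E')) :=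
          hlow _ (Finset.insert_subset_insert _ (Finset.union_subset hE hE'mem))
        have hiEE' : i₀ ∉ E ∪ E' := by
          simp only [Finset.mem_union]
          rintro (h | h)
          · exact hi₀ (hE h)
          · exact hi₀ (hE'mem h)
        rw [Finset.sum_insert hiEE'] at h2
        have h3 : ∑ i ∈ E, cap i ≤ ∑ i ∈ E ∪ E', cap i :=
          Finset.sum_le_sum_of_subset_of_nonneg Finset.subset_union_left (fun i _ _ => hcap i)
        have h4 : g (insert i₀ E') = infv := hE'eq.symm
        rw [hceq]; linarith
    set g' : Finset ι → ℝ := fun E => min (g E) (g (insert i₀ E) - c) with hg'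
    have hg'_le : ∀ E, g' E ≤ g E := fun E => min_le_left _ _
    have hg'0 : g' ∅ = 0 := by
      have h1 : 0 ≤ g (insert i₀ ∅) - c := by
        have := hinf_le ∅ (by simp); linarith
      simp only [hg']
      rw [hg0]
      exact min_eq_left (by simpa using h1)
    have hg'pos : ∀ E, E ⊆ S' → 0 ≤ g' E := by
      intro E hE
      refine le_min (hpos E (hsubS E hE)) ?_
      have := hinf_le E hE; linarith
    have hg'low : ∀ E, E ⊆ S' → ∑ i ∈ E, cap i - (s₀ - (cap i₀ - c)) ≤ g' E := by
      intro E hE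
      refine le_min ?_ ?_
      · have := hkey E hE; linarith
      · have := hlow (insert i₀ E) (hinsS E hE)
        have hiE : i₀ ∉ E := fun h => hi₀ (hE h)
        rw [Finset.sum_insert hiE] at this
        linarith
    have hg'sub : ∀ E, E ⊆ S' → ∀ E', E' ⊆ S' → g' (E ∪ E') + g' (E ∩ E') ≤ g' E + g' E' := by
      intro E hE E' hE'
      have hiE : i₀ ∉ E := fun h => hi₀ (hE h)
      have hiE' : i₀ ∉ E' := fun h => hi₀ (hE' h)
      have hEu : E ∪ insert i₀ E' = insert i₀ (E ∪ E') := by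
        ext x; simp only [Finset.mem_insert, Finset.mem_union]; tauto
      have hEu2 : insert i₀ E ∪ E' = insert i₀ (E ∪ E') := by
        ext x; simp only [Finset.mem_insert, Finset.mem_union]; tauto
      have hEu3 : insert i₀ E ∪ insert i₀ E' = insert i₀ (E ∪ E') := by
        ext x; simp only [Finset.mem_insert, Finset.mem_union]; tauto
      have hEi : E ∩ insert i₀ E' = E ∩ E' := by
        ext x; simp only [Finset.mem_inter, Finset.mem_insert]
        constructor
        · rintro ⟨hx, hx' | hx'⟩
          · exact absurd (by rwa [hx'] at hx) hiE
          · exact ⟨hx, hx'⟩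
        · rintro ⟨hx, hx'⟩; exact ⟨hx, Or.inr hx'⟩
      have hEi2 : insert i₀ E ∩ E' = E ∩ E' := by
        ext x; simp only [Finset.mem_inter, Finset.mem_insert]
        constructor
        · rintro ⟨hx | hx, hx'⟩
          · exact absurd (by rwa [hx] at hx') hiE'
          · exact ⟨hx, hx'⟩
        · rintro ⟨hx, hx'⟩; exact ⟨Or.inr hx, hx'⟩
      have hEi3 : insert i₀ E ∩ insert i₀ E' = insert i₀ (E ∩ E') := by
        ext x; simp only [Finset.mem_inter, Finset.mem_insert]; tauto
      rcases min_cases (g E) (g (insert i₀ E) - c) with ⟨he, _⟩ | ⟨he, _⟩ <;>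
        rcases min_cases (g E') (g (insert i₀ E') - c) with ⟨he', _⟩ | ⟨he', _⟩
      · have hsm := hsub E (hsubS E hE) E' (hsubS E' hE')
        have h1 : g' (E ∪ E') ≤ g (E ∪ E') := min_le_left _ _
        have h2 : g' (E ∩ E') ≤ g (E ∩ E') := min_le_left _ _
        simp only [hg'] at *
        rw [he, he']
        linarith
      · have hsm := hsub E (hsubS E hE) (insert i₀ E') (hinsS E' hE')
        rw [hEu, hEi] at hsm
        have h1 : g' (E ∪ E') ≤ g (insert i₀ (E ∪ E')) - c := min_le_right _ _
        have h2 : g' (E ∩ E') ≤ g (E ∩ E') := min_le_left _ _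
        simp only [hg'] at *
        rw [he, he']
        linarith
      · have hsm := hsub (insert i₀ E) (hinsS E hE) E' (hsubS E' hE')
        rw [hEu2, hEi2] at hsm
        have h1 : g' (E ∪ E') ≤ g (insert i₀ (E ∪ E')) - c := min_le_right _ _
        have h2 : g' (E ∩ E') ≤ g (E ∩ E') := min_le_left _ _
        simp only [hg'] at *
        rw [he, he']
        linarith
      · have hsm := hsub (insert i₀ E) (hinsS E hE) (insert i₀ E') (hinsS E' hE')
        rw [hEu3, hEi3] at hsm
        have h1 : g' (E ∪ E') ≤ g (insert i₀ (E ∪ E')) - c := min_le_right _ _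
        have h2 : g' (E ∩ E') ≤ g (insert i₀ (E ∩ E')) - c := min_le_right _ _
        simp only [hg'] at *
        rw [he, he']
        linarith
    obtain ⟨x', hx'b, hx'E, hx'tot⟩ := IH g' (s₀ - (cap i₀ - c)) hg'0 hg'sub hg'pos hg'low
    refine ⟨Function.update x' i₀ c, ?_, ?_, ?_⟩
    · intro i
      rcases eq_or_ne i i₀ with rfl | h
      · simp [Function.update_self, hc_nonneg, hc_cap]
      · simp [Function.update_of_ne h, hx'b i]
    · intro E hE
      by_cases hiE : i₀ ∈ E
      · have hE' : E.erase i₀ ⊆ S' := by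
          intro x hx
          rcases Finset.mem_insert.mp (hE (Finset.mem_of_mem_erase hx)) with h | h
          · exact absurd h (Finset.ne_of_mem_erase hx)
          · exact h
        have hsum : ∑ i ∈ E, Function.update x' i₀ c i = c + ∑ i ∈ E.erase i₀, x' i := by
          rw [← Finset.add_sum_erase _ _ hiE, Function.update_self]
          congr 1
          exact Finset.sum_congr rfl fun i hi =>
            Function.update_of_ne (Finset.ne_of_mem_erase hi) _ _
        rw [hsum]
        have h2 := hx'E _ hE'
        have h3 : g' (E.erase i₀) ≤ g (insert i₀ (E.erase i₀)) - c := min_le_right _ _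
        rw [Finset.insert_erase hiE] at h3
        linarith
      · have hE' : E ⊆ S' := by
          intro x hx
          rcases Finset.mem_insert.mp (hE hx) with h | h
          · exact absurd (by rwa [h] at hx) hiE
          · exact h
        have h1 : ∑ i ∈ E, Function.update x' i₀ c i = ∑ i ∈ E, x' i :=
          Finset.sum_congr rfl fun i hi =>
            Function.update_of_ne (fun h => hiE (by rwa [h] at hi)) _ _
        rw [h1]
        exact (hx'E E hE').trans (hg'_le E)
    · rw [Finset.sum_insert hi₀, Finset.sum_insert hi₀, Function.update_self]
      have h1 : ∑ i ∈ S', Function.update x' i₀ c i = ∑ i ∈ S', x' i :=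
        Finset.sum_congr rfl fun i hi =>
          Function.update_of_ne (fun h => hi₀ (by rwa [h] at hi)) _ _
      rw [h1]
      linarith

lemma flow_feasible {ι κ : Type*} [Fintype ι] [DecidableEq ι] [DecidableEq κ]
    (T : Finset κ) (w : ι → κ → ℝ) (s : κ → ℝ)
    (hw : ∀ i j, 0 ≤ w i j) :
    ∀ r : ι → ℝ,
    (∀ (E : Finset ι) (F : Finset κ), F ⊆ T →
      ∑ i ∈ E, ∑ j ∈ F, w i j ≤ ∑ i ∈ E, r i + ∑ j ∈ F, s j) →
    ∃ x : ι → κ → ℝ, (∀ i j, 0 ≤ x i j ∧ x i j ≤ w i j) ∧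
      (∀ i, ∑ j ∈ T, x i j ≤ r i) ∧
      (∀ j ∈ T, ∑ i : ι, (w i j - x i j) ≤ s j) := by
  induction T using Finset.induction with
  | empty =>
    intro r H
    refine ⟨fun _ _ => 0, fun i j => ⟨le_refl _, hw i j⟩, fun i => ?_, fun j hj => absurd hj (Finset.notMem_empty j)⟩
    simpa using H {i} ∅ (Finset.Subset.refl _)
  | @insert j₀ T' hj₀ IH =>
    intro r H
    -- s is nonneg on insert j₀ T'
    have hs : ∀ j ∈ insert j₀ T', 0 ≤ s j := by
      intro j hj
      simpa using H ∅ {j} (Finset.singleton_subset_iff.mpr hj)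
    set g : Finset ι → ℝ :=
      fun E => ∑ i ∈ E, r i - ∑ j ∈ T', max (∑ i ∈ E, w i j - s j) 0 with hgdef
    -- the filter identity
    have hfil : ∀ E : Finset ι, ∑ j ∈ T', max (∑ i ∈ E, w i j - s j) 0
        = ∑ j ∈ T'.filter (fun j => s j < ∑ i ∈ E, w i j), (∑ i ∈ E, w i j - s j) := by
      intro E
      rw [Finset.sum_filter]
      refine Finset.sum_congr rfl fun j _ => ?_
      rcases lt_or_ge (s j) (∑ i ∈ E, w i j) with h | h
      · rw [if_pos h, max_eq_left (by linarith)]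
      · rw [if_neg (not_lt.mpr h), max_eq_right (by linarith)]
    have hg0 : g ∅ = 0 := by
      simp only [hgdef, Finset.sum_empty, zero_sub, neg_eq_zero]
      refine Finset.sum_eq_zero fun j hj => ?_
      have := hs j (Finset.mem_insert_of_mem hj)
      rw [max_eq_right (by linarith)]
    have hpos : ∀ E : Finset ι, 0 ≤ g E := by
      intro E
      simp only [hgdef, sub_nonneg]
      rw [hfil E]
      set F := T'.filter (fun j => s j < ∑ i ∈ E, w i j) with hF
      have hFsub : F ⊆ insert j₀ T' :=
        (Finset.filter_subset _ _).trans (Finset.subset_insert _ _)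
      have := H E F hFsub
      rw [Finset.sum_sub_distrib]
      rw [Finset.sum_comm] at this
      linarith
    have hlow : ∀ E : Finset ι, ∑ i ∈ E, w i j₀ - s j₀ ≤ g E := by
      intro E
      simp only [hgdef]
      rw [hfil E]
      set F := T'.filter (fun j => s j < ∑ i ∈ E, w i j) with hF
      have hj₀F : j₀ ∉ F := fun h => hj₀ (Finset.mem_of_mem_filter _ h)
      have hFsub : insert j₀ F ⊆ insert j₀ T' :=
        Finset.insert_subset_insert _ (Finset.filter_subset _ _)
      have := H E (insert j₀ F) hFsub
      rw [Finset.sum_comm, Finset.sum_insert hj₀F, Finset.sum_insert hj₀F] at this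
      rw [Finset.sum_sub_distrib]
      linarith
    have hsub : ∀ E, E ⊆ (Finset.univ : Finset ι) → ∀ E', E' ⊆ Finset.univ →
        g (E ∪ E') + g (E ∩ E') ≤ g E + g E' := by
      intro E _ E' _
      simp only [hgdef]
      have hr : ∑ i ∈ E ∪ E', r i + ∑ i ∈ E ∩ E', r i = ∑ i ∈ E, r i + ∑ i ∈ E', r i :=
        Finset.sum_union_inter
      have hterm : ∀ j ∈ T', max (∑ i ∈ E, w i j - s j) 0 + max (∑ i ∈ E', w i j - s j) 0
          ≤ max (∑ i ∈ E ∩ E', w i j - s j) 0 + max (∑ i ∈ E ∪ E', w i j - s j) 0 := by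
        intro j _
        refine max_conv' ?_ ?_ ?_ ?_ ?_
        · exact (add_comm _ _).trans Finset.sum_union_inter
        · exact Finset.sum_le_sum_of_subset_of_nonneg Finset.inter_subset_left
            (fun i _ _ => hw i j)
        · exact Finset.sum_le_sum_of_subset_of_nonneg Finset.inter_subset_right
            (fun i _ _ => hw i j)
        · exact Finset.sum_le_sum_of_subset_of_nonneg Finset.subset_union_left
            (fun i _ _ => hw i j)
        · exact Finset.sum_le_sum_of_subset_of_nonneg Finset.subset_union_right
            (fun i _ _ => hw i j)
      have := Finset.sum_le_sum hterm
      rw [Finset.sum_add_distrib, Finset.sum_add_distrib] at this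
      linarith
    obtain ⟨y, hyb, hyE, hytot⟩ := submodular_feasible Finset.univ (fun i => w i j₀)
      (fun i => hw i j₀) g (s j₀) hg0 hsub (fun E _ => hpos E) (fun E _ => hlow E)
    -- reduced row budgets
    have H' : ∀ (E : Finset ι) (F : Finset κ), F ⊆ T' →
        ∑ i ∈ E, ∑ j ∈ F, w i j ≤ ∑ i ∈ E, (r i - y i) + ∑ j ∈ F, s j := by
      intro E F hF
      have h1 := hyE E (Finset.subset_univ _)
      simp only [hgdef] at h1
      have h2 : ∑ j ∈ F, (∑ i ∈ E, w i j - s j) ≤ ∑ j ∈ T', max (∑ i ∈ E, w i j - s j) 0 := by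
        calc ∑ j ∈ F, (∑ i ∈ E, w i j - s j)
            ≤ ∑ j ∈ F, max (∑ i ∈ E, w i j - s j) 0 :=
              Finset.sum_le_sum fun j _ => le_max_left _ _
          _ ≤ ∑ j ∈ T', max (∑ i ∈ E, w i j - s j) 0 :=
              Finset.sum_le_sum_of_subset_of_nonneg hF fun j _ _ => le_max_right _ _
      rw [Finset.sum_sub_distrib] at h2
      rw [Finset.sum_sub_distrib, Finset.sum_comm]
      linarith
    obtain ⟨x', hx'b, hx'row, hx'col⟩ := IH (fun i => r i - y i) H'
    refine ⟨fun i => Function.update (x' i) j₀ (y i), ?_, ?_, ?_⟩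
    · intro i j
      dsimp only
      rcases eq_or_ne j j₀ with rfl | h
      · rw [Function.update_self]; exact hyb i
      · rw [Function.update_of_ne h]; exact hx'b i j
    · intro i
      dsimp only
      rw [Finset.sum_insert hj₀, Function.update_self]
      have h1 : ∑ j ∈ T', Function.update (x' i) j₀ (y i) j = ∑ j ∈ T', x' i j :=
        Finset.sum_congr rfl fun j hj =>
          Function.update_of_ne (fun h => hj₀ (by rwa [h] at hj)) _ _
      rw [h1]
      have := hx'row i
      linarith
    · intro j hj
      dsimp only
      rcases Finset.mem_insert.mp hj with rfl | hj'
      · simp only [Function.update_self]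
        rw [Finset.sum_sub_distrib]
        linarith [hytot]
      · have h1 : ∀ i, Function.update (x' i) j₀ (y i) j = x' i j := fun i =>
          Function.update_of_ne (fun h => hj₀ (by rwa [h] at hj')) _ _
        simp only [h1]
        exact hx'col j hj'

/-- Theorem 4.1, finite case: the `ℓ^∞ → ℓ^∞` operator norm of the
kernel operator equals `max_i ∑_j |k(i,j)| ν_j`, the `ℓ^1(ν) → ℓ^1(μ)` operator norm
equals `max_j ∑_i |k(i,j)| μ_i`, and the `K_t`-functional of the couple
`(B(ℓ^∞,ℓ^∞), B(ℓ^1,ℓ^1))`, computed through kernels with these norms, satisfies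
`(1/2) K_t(u) ≤ sup_{E,F} (μ(E) ∨ t⁻¹ν(F))⁻¹ ∑_{E×F} |k| μ ν ≤ K_t(u)`. -/
theorem kernel_operator_Kt (m n : ℕ) (hm : 0 < m) (hn : 0 < n)
    (μ : Fin m → ℝ) (ν : Fin n → ℝ) (hμ : ∀ i, 0 < μ i) (hν : ∀ j, 0 < ν j)
    (t : ℝ) (ht : 0 < t) (k : Fin m × Fin n → ℝ) :
    sSup {x : ℝ | ∃ f : Fin n → ℝ, (∀ j, |f j| ≤ 1) ∧
        x = ⨆ i : Fin m, |kernelOp ν k f i|} =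
      (⨆ i : Fin m, ∑ j : Fin n, |k (i, j)| * ν j) ∧
    sSup {x : ℝ | ∃ f : Fin n → ℝ, (∑ j : Fin n, |f j| * ν j) ≤ 1 ∧
        x = ∑ i : Fin m, |kernelOp ν k f i| * μ i} =
      (⨆ j : Fin n, ∑ i : Fin m, |k (i, j)| * μ i) ∧
    (2⁻¹ * sInf {x : ℝ | ∃ b c : Fin m × Fin n → ℝ, k = b + c ∧
        x = (⨆ i : Fin m, ∑ j : Fin n, |b (i, j)| * ν j) +
          t * ⨆ j : Fin n, ∑ i : Fin m, |c (i, j)| * μ i} ≤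
      sSup {x : ℝ | ∃ (E : Finset (Fin m)) (F : Finset (Fin n)),
        E.Nonempty ∧ F.Nonempty ∧
        x = (max (∑ i ∈ E, μ i) (t⁻¹ * ∑ j ∈ F, ν j))⁻¹ *
          ∑ i ∈ E, ∑ j ∈ F, |k (i, j)| * μ i * ν j} ∧
      sSup {x : ℝ | ∃ (E : Finset (Fin m)) (F : Finset (Fin n)),
        E.Nonempty ∧ F.Nonempty ∧
        x = (max (∑ i ∈ E, μ i) (t⁻¹ * ∑ j ∈ F, ν j))⁻¹ *
          ∑ i ∈ E, ∑ j ∈ F, |k (i, j)| * μ i * ν j} ≤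
      sInf {x : ℝ | ∃ b c : Fin m × Fin n → ℝ, k = b + c ∧
        x = (⨆ i : Fin m, ∑ j : Fin n, |b (i, j)| * ν j) +
          t * ⨆ j : Fin n, ∑ i : Fin m, |c (i, j)| * μ i}) := by
  haveI : Nonempty (Fin m) := ⟨⟨0, hm⟩⟩
  haveI : Nonempty (Fin n) := ⟨⟨0, hn⟩⟩
  have hbddm : ∀ f : Fin m → ℝ, BddAbove (Set.range f) :=
    fun f => (Set.finite_range f).bddAbove
  have hbddn : ∀ f : Fin n → ℝ, BddAbove (Set.range f) :=
    fun f => (Set.finite_range f).bddAbove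
  refine ⟨?_, ?_, ?_⟩
  · -- Part 1
    have habs : ∀ (f : Fin n → ℝ), (∀ j, |f j| ≤ 1) → ∀ i,
        |kernelOp ν k f i| ≤ ∑ j : Fin n, |k (i, j)| * ν j := by
      intro f hf i
      refine (Finset.abs_sum_le_sum_abs _ _).trans (Finset.sum_le_sum fun j _ => ?_)
      rw [abs_mul, abs_mul, abs_of_pos (hν j)]
      have h1 : |k (i, j)| * |f j| ≤ |k (i, j)| * 1 :=
        mul_le_mul_of_nonneg_left (hf j) (abs_nonneg _)
      have := mul_le_mul_of_nonneg_right h1 (le_of_lt (hν j))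
      linarith
    obtain ⟨i₀, hi₀⟩ := Finite.exists_max (fun i : Fin m => ∑ j : Fin n, |k (i, j)| * ν j)
    have hR1 : (⨆ i : Fin m, ∑ j : Fin n, |k (i, j)| * ν j) = ∑ j : Fin n, |k (i₀, j)| * ν j :=
      le_antisymm (ciSup_le hi₀) (le_ciSup (f := fun i : Fin m => ∑ j : Fin n, |k (i, j)| * ν j) (hbddm _) i₀)
    set f₀ : Fin n → ℝ := fun j => if 0 ≤ k (i₀, j) then 1 else -1 with hf₀def
    have hf₀ : ∀ j, |f₀ j| ≤ 1 := by
      intro j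
      by_cases h : 0 ≤ k (i₀, j) <;> simp [hf₀def, h]
    have heval : kernelOp ν k f₀ i₀ = ∑ j : Fin n, |k (i₀, j)| * ν j := by
      unfold kernelOp
      refine Finset.sum_congr rfl fun j _ => ?_
      by_cases h : 0 ≤ k (i₀, j)
      · rw [hf₀def]; simp only [if_pos h]
        rw [abs_of_nonneg h]; ring
      · rw [hf₀def]; simp only [if_neg h]
        rw [abs_of_neg (lt_of_not_ge h)]; ring
    have hsup : (⨆ i : Fin m, |kernelOp ν k f₀ i|) = ∑ j : Fin n, |k (i₀, j)| * ν j := by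
      refine le_antisymm (ciSup_le fun i => (habs f₀ hf₀ i).trans (hi₀ i)) ?_
      refine le_trans ?_ (le_ciSup (f := fun i : Fin m => |kernelOp ν k f₀ i|) (hbddm _) i₀)
      rw [heval]
      exact le_abs_self _
    rw [hR1]
    refine le_antisymm ?_ ?_
    · refine csSup_le ⟨_, f₀, hf₀, hsup.symm⟩ ?_
      rintro x ⟨f, hf, rfl⟩
      exact ciSup_le fun i => (habs f hf i).trans (hi₀ i)
    · refine le_csSup ⟨∑ j : Fin n, |k (i₀, j)| * ν j, ?_⟩ ⟨f₀, hf₀, hsup.symm⟩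
      rintro x ⟨f, hf, rfl⟩
      exact ciSup_le fun i => (habs f hf i).trans (hi₀ i)
  · -- Part 2
    have habs : ∀ (f : Fin n → ℝ), (∑ j : Fin n, |f j| * ν j) ≤ 1 →
        ∑ i : Fin m, |kernelOp ν k f i| * μ i ≤ ⨆ j : Fin n, ∑ i : Fin m, |k (i, j)| * μ i := by
      intro f hf
      obtain ⟨j₁, hj₁⟩ := Finite.exists_max (fun j : Fin n => ∑ i : Fin m, |k (i, j)| * μ i)
      have hR : ∀ j, ∑ i : Fin m, |k (i, j)| * μ i ≤ ⨆ j : Fin n, ∑ i : Fin m, |k (i, j)| * μ i :=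
        fun j => le_ciSup (f := fun j : Fin n => ∑ i : Fin m, |k (i, j)| * μ i) (hbddn _) j
      have hRnn : 0 ≤ ⨆ j : Fin n, ∑ i : Fin m, |k (i, j)| * μ i :=
        le_trans (Finset.sum_nonneg fun i _ => mul_nonneg (abs_nonneg _) (le_of_lt (hμ i))) (hR j₁)
      have step1 : ∑ i : Fin m, |kernelOp ν k f i| * μ i ≤
          ∑ j : Fin n, (|f j| * ν j) * (∑ i : Fin m, |k (i, j)| * μ i) := by
        have h1 : ∀ i, |kernelOp ν k f i| ≤ ∑ j : Fin n, |k (i, j)| * |f j| * ν j := by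
          intro i
          refine (Finset.abs_sum_le_sum_abs _ _).trans (Finset.sum_le_sum fun j _ => ?_)
          rw [abs_mul, abs_mul, abs_of_pos (hν j)]
        refine le_trans (Finset.sum_le_sum fun i _ =>
          mul_le_mul_of_nonneg_right (h1 i) (le_of_lt (hμ i))) ?_
        refine le_of_eq ?_
        calc ∑ i : Fin m, (∑ j : Fin n, |k (i, j)| * |f j| * ν j) * μ i
            = ∑ i : Fin m, ∑ j : Fin n, |k (i, j)| * |f j| * ν j * μ i :=
              Finset.sum_congr rfl fun i _ => Finset.sum_mul _ _ _
          _ = ∑ j : Fin n, ∑ i : Fin m, |k (i, j)| * |f j| * ν j * μ i := Finset.sum_comm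
          _ = ∑ j : Fin n, (|f j| * ν j) * (∑ i : Fin m, |k (i, j)| * μ i) := by
              refine Finset.sum_congr rfl fun j _ => ?_
              rw [Finset.mul_sum]
              exact Finset.sum_congr rfl fun i _ => by ring
      refine step1.trans ?_
      calc ∑ j : Fin n, (|f j| * ν j) * (∑ i : Fin m, |k (i, j)| * μ i)
          ≤ ∑ j : Fin n, (|f j| * ν j) * (⨆ j : Fin n, ∑ i : Fin m, |k (i, j)| * μ i) := by
            refine Finset.sum_le_sum fun j _ => ?_
            exact mul_le_mul_of_nonneg_left (hR j)
              (mul_nonneg (abs_nonneg _) (le_of_lt (hν j)))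
        _ = (∑ j : Fin n, |f j| * ν j) * (⨆ j : Fin n, ∑ i : Fin m, |k (i, j)| * μ i) := by
            rw [← Finset.sum_mul]
        _ ≤ 1 * (⨆ j : Fin n, ∑ i : Fin m, |k (i, j)| * μ i) :=
            mul_le_mul_of_nonneg_right hf hRnn
        _ = _ := one_mul _
    obtain ⟨j₀, hj₀⟩ := Finite.exists_max (fun j : Fin n => ∑ i : Fin m, |k (i, j)| * μ i)
    have hR2 : (⨆ j : Fin n, ∑ i : Fin m, |k (i, j)| * μ i) = ∑ i : Fin m, |k (i, j₀)| * μ i :=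
      le_antisymm (ciSup_le hj₀) (le_ciSup (f := fun j : Fin n => ∑ i : Fin m, |k (i, j)| * μ i) (hbddn _) j₀)
    set f₀ : Fin n → ℝ := fun j => if j = j₀ then (ν j₀)⁻¹ else 0 with hf₀def
    have hf₀ : (∑ j : Fin n, |f₀ j| * ν j) ≤ 1 := by
      rw [hf₀def]
      rw [Finset.sum_eq_single j₀]
      · have h' : |(ν j₀)⁻¹| = (ν j₀)⁻¹ := abs_of_pos (inv_pos.mpr (hν j₀))
        simp [h', inv_mul_cancel₀ (ne_of_gt (hν j₀))]
      · intro j _ hj; simp [if_neg hj]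
      · intro h; exact absurd (Finset.mem_univ j₀) h
    have heval : ∀ i, kernelOp ν k f₀ i = k (i, j₀) := by
      intro i
      unfold kernelOp
      rw [Finset.sum_eq_single j₀]
      · rw [hf₀def]
        simp only [if_pos rfl, if_true]
        rw [mul_assoc, inv_mul_cancel₀ (ne_of_gt (hν j₀)), mul_one]
      · intro j _ hj; rw [hf₀def]; simp [if_neg hj]
      · intro h; exact absurd (Finset.mem_univ j₀) h
    have hmem : (∑ i : Fin m, |k (i, j₀)| * μ i) ∈
        {x : ℝ | ∃ f : Fin n → ℝ, (∑ j : Fin n, |f j| * ν j) ≤ 1 ∧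
          x = ∑ i : Fin m, |kernelOp ν k f i| * μ i} := by
      refine ⟨f₀, hf₀, ?_⟩
      refine (Finset.sum_congr rfl fun i _ => ?_).symm
      rw [heval i]
    rw [hR2]
    refine le_antisymm ?_ ?_
    · refine csSup_le ⟨_, hmem⟩ ?_
      rintro x ⟨f, hf, rfl⟩
      exact (habs f hf).trans_eq hR2
    · exact le_csSup ⟨∑ i : Fin m, |k (i, j₀)| * μ i, by
        rintro x ⟨f, hf, rfl⟩
        exact (habs f hf).trans_eq hR2⟩ hmem
  set A := {x : ℝ | ∃ b c : Fin m × Fin n → ℝ, k = b + c ∧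
      x = (⨆ i : Fin m, ∑ j : Fin n, |b (i, j)| * ν j) +
        t * ⨆ j : Fin n, ∑ i : Fin m, |c (i, j)| * μ i} with hA
  set B := {x : ℝ | ∃ (E : Finset (Fin m)) (F : Finset (Fin n)),
      E.Nonempty ∧ F.Nonempty ∧
      x = (max (∑ i ∈ E, μ i) (t⁻¹ * ∑ j ∈ F, ν j))⁻¹ *
        ∑ i ∈ E, ∑ j ∈ F, |k (i, j)| * μ i * ν j} with hB
  -- the key upper bound on elements of B
  have hBle : ∀ b c : Fin m × Fin n → ℝ, k = b + c → ∀ x ∈ B,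
      x ≤ (⨆ i : Fin m, ∑ j : Fin n, |b (i, j)| * ν j) +
        t * ⨆ j : Fin n, ∑ i : Fin m, |c (i, j)| * μ i := by
    intro b c hbc x hx
    obtain ⟨E, F, hE, hF, rfl⟩ := hx
    set Mb := ⨆ i : Fin m, ∑ j : Fin n, |b (i, j)| * ν j with hMb
    set Mc := ⨆ j : Fin n, ∑ i : Fin m, |c (i, j)| * μ i with hMc
    have hMb0 : 0 ≤ Mb := by
      set i1 : Fin m := Classical.arbitrary _ with hi1
      have h0 : 0 ≤ ∑ j : Fin n, |b (i1, j)| * ν j :=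
        Finset.sum_nonneg fun j _ => mul_nonneg (abs_nonneg _) (le_of_lt (hν j))
      exact le_trans h0
        (le_ciSup (f := fun i : Fin m => ∑ j : Fin n, |b (i, j)| * ν j) (hbddm _) i1)
    have hMc0 : 0 ≤ Mc := by
      set j1 : Fin n := Classical.arbitrary _ with hj1
      have h0 : 0 ≤ ∑ i : Fin m, |c (i, j1)| * μ i :=
        Finset.sum_nonneg fun i _ => mul_nonneg (abs_nonneg _) (le_of_lt (hμ i))
      exact le_trans h0
        (le_ciSup (f := fun j : Fin n => ∑ i : Fin m, |c (i, j)| * μ i) (hbddn _) j1)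
    have hrowb : ∀ i, ∑ j ∈ F, |b (i, j)| * ν j ≤ Mb := by
      intro i
      refine le_trans (Finset.sum_le_sum_of_subset_of_nonneg (Finset.subset_univ F)
        fun j _ _ => mul_nonneg (abs_nonneg _) (le_of_lt (hν j))) ?_
      exact le_ciSup (f := fun i : Fin m => ∑ j : Fin n, |b (i, j)| * ν j) (hbddm _) i
    have hcolc : ∀ j, ∑ i ∈ E, |c (i, j)| * μ i ≤ Mc := by
      intro j
      refine le_trans (Finset.sum_le_sum_of_subset_of_nonneg (Finset.subset_univ E)
        fun i _ _ => mul_nonneg (abs_nonneg _) (le_of_lt (hμ i))) ?_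
      exact le_ciSup (f := fun j : Fin n => ∑ i : Fin m, |c (i, j)| * μ i) (hbddn _) j
    set P := max (∑ i ∈ E, μ i) (t⁻¹ * ∑ j ∈ F, ν j) with hP
    have hμE : 0 < ∑ i ∈ E, μ i := Finset.sum_pos (fun i _ => hμ i) hE
    have hνF : 0 < ∑ j ∈ F, ν j := Finset.sum_pos (fun j _ => hν j) hF
    have hPpos : 0 < P := lt_of_lt_of_le hμE (le_max_left _ _)
    have hmain : ∑ i ∈ E, ∑ j ∈ F, |k (i, j)| * μ i * ν j ≤ P * (Mb + t * Mc) := by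
      have hsplit : ∑ i ∈ E, ∑ j ∈ F, |k (i, j)| * μ i * ν j ≤
          (∑ i ∈ E, ∑ j ∈ F, |b (i, j)| * μ i * ν j) +
          (∑ i ∈ E, ∑ j ∈ F, |c (i, j)| * μ i * ν j) := by
        rw [← Finset.sum_add_distrib]
        refine Finset.sum_le_sum fun i _ => ?_
        rw [← Finset.sum_add_distrib]
        refine Finset.sum_le_sum fun j _ => ?_
        have : |k (i, j)| ≤ |b (i, j)| + |c (i, j)| := by
          rw [hbc]; exact abs_add_le _ _
        have hμν : 0 ≤ μ i * ν j := mul_nonneg (le_of_lt (hμ i)) (le_of_lt (hν j))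
        nlinarith [abs_nonneg (k (i,j)), abs_nonneg (b (i,j)), abs_nonneg (c (i,j))]
      have hbpart : ∑ i ∈ E, ∑ j ∈ F, |b (i, j)| * μ i * ν j ≤ P * Mb := by
        have h1 : ∀ i, ∑ j ∈ F, |b (i, j)| * μ i * ν j = μ i * ∑ j ∈ F, |b (i, j)| * ν j := by
          intro i
          rw [Finset.mul_sum]
          exact Finset.sum_congr rfl fun j _ => by ring
        calc ∑ i ∈ E, ∑ j ∈ F, |b (i, j)| * μ i * ν j
            = ∑ i ∈ E, μ i * ∑ j ∈ F, |b (i, j)| * ν j :=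
              Finset.sum_congr rfl fun i _ => h1 i
          _ ≤ ∑ i ∈ E, μ i * Mb := Finset.sum_le_sum fun i _ =>
              mul_le_mul_of_nonneg_left (hrowb i) (le_of_lt (hμ i))
          _ = (∑ i ∈ E, μ i) * Mb := by rw [Finset.sum_mul]
          _ ≤ P * Mb := mul_le_mul_of_nonneg_right (le_max_left _ _) hMb0
      have hcpart : ∑ i ∈ E, ∑ j ∈ F, |c (i, j)| * μ i * ν j ≤ P * (t * Mc) := by
        have h1 : ∑ i ∈ E, ∑ j ∈ F, |c (i, j)| * μ i * ν j
            = ∑ j ∈ F, ν j * ∑ i ∈ E, |c (i, j)| * μ i := by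
          rw [Finset.sum_comm]
          refine Finset.sum_congr rfl fun j _ => ?_
          rw [Finset.mul_sum]
          exact Finset.sum_congr rfl fun i _ => by ring
        calc ∑ i ∈ E, ∑ j ∈ F, |c (i, j)| * μ i * ν j
            = ∑ j ∈ F, ν j * ∑ i ∈ E, |c (i, j)| * μ i := h1
          _ ≤ ∑ j ∈ F, ν j * Mc := Finset.sum_le_sum fun j _ =>
              mul_le_mul_of_nonneg_left (hcolc j) (le_of_lt (hν j))
          _ = (∑ j ∈ F, ν j) * Mc := by rw [Finset.sum_mul]
          _ = t * ((t⁻¹ * ∑ j ∈ F, ν j) * Mc) := by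
              field_simp
          _ ≤ t * (P * Mc) := by
              refine mul_le_mul_of_nonneg_left ?_ (le_of_lt ht)
              exact mul_le_mul_of_nonneg_right (le_max_right _ _) hMc0
          _ = P * (t * Mc) := by ring
      calc ∑ i ∈ E, ∑ j ∈ F, |k (i, j)| * μ i * ν j
          ≤ (∑ i ∈ E, ∑ j ∈ F, |b (i, j)| * μ i * ν j) +
            (∑ i ∈ E, ∑ j ∈ F, |c (i, j)| * μ i * ν j) := hsplit
        _ ≤ P * Mb + P * (t * Mc) := add_le_add hbpart hcpart
        _ = P * (Mb + t * Mc) := by ring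
    rw [← div_eq_inv_mul, div_le_iff₀ hPpos]
    calc ∑ i ∈ E, ∑ j ∈ F, |k (i, j)| * μ i * ν j ≤ P * (Mb + t * Mc) := hmain
      _ = (Mb + t * Mc) * P := by ring
  have hAne : A.Nonempty := ⟨_, k, 0, (add_zero k).symm, rfl⟩
  have hBne : B.Nonempty := by
    refine ⟨_, Finset.univ, Finset.univ, Finset.univ_nonempty, Finset.univ_nonempty, rfl⟩
  have hBbdd : BddAbove B := by
    refine ⟨_, fun x hx => hBle k 0 (add_zero k).symm x hx⟩
  constructor
  · -- hard direction
    set lam := sSup B with hlam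
    have hBnonneg : ∀ x ∈ B, 0 ≤ x := by
      rintro x ⟨E, F, hE, hF, rfl⟩
      have hμE : 0 < ∑ i ∈ E, μ i := Finset.sum_pos (fun i _ => hμ i) hE
      have hPpos : (0:ℝ) < max (∑ i ∈ E, μ i) (t⁻¹ * ∑ j ∈ F, ν j) :=
        lt_of_lt_of_le hμE (le_max_left _ _)
      refine mul_nonneg (inv_nonneg.mpr (le_of_lt hPpos)) ?_
      refine Finset.sum_nonneg fun i _ => Finset.sum_nonneg fun j _ => ?_
      exact mul_nonneg (mul_nonneg (abs_nonneg _) (le_of_lt (hμ i))) (le_of_lt (hν j))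
    have hlam0 : 0 ≤ lam := by
      obtain ⟨x, hx⟩ := hBne
      exact le_trans (hBnonneg x hx) (le_csSup hBbdd hx)
    -- rectangle bound
    have hrect : ∀ (E : Finset (Fin m)) (F : Finset (Fin n)), E.Nonempty → F.Nonempty →
        ∑ i ∈ E, ∑ j ∈ F, |k (i, j)| * μ i * ν j ≤
          max (∑ i ∈ E, μ i) (t⁻¹ * ∑ j ∈ F, ν j) * lam := by
      intro E F hE hF
      have hμE : 0 < ∑ i ∈ E, μ i := Finset.sum_pos (fun i _ => hμ i) hE
      have hPpos : (0:ℝ) < max (∑ i ∈ E, μ i) (t⁻¹ * ∑ j ∈ F, ν j) :=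
        lt_of_lt_of_le hμE (le_max_left _ _)
      have hmem : (max (∑ i ∈ E, μ i) (t⁻¹ * ∑ j ∈ F, ν j))⁻¹ *
          ∑ i ∈ E, ∑ j ∈ F, |k (i, j)| * μ i * ν j ∈ B := ⟨E, F, hE, hF, rfl⟩
      have := le_csSup hBbdd hmem
      rw [← div_eq_inv_mul, div_le_iff₀ hPpos] at this
      calc ∑ i ∈ E, ∑ j ∈ F, |k (i, j)| * μ i * ν j ≤ lam * max (∑ i ∈ E, μ i) (t⁻¹ * ∑ j ∈ F, ν j) := this
        _ = _ := by ring
    -- Hall condition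
    set w : Fin m → Fin n → ℝ := fun i j => |k (i, j)| * μ i * ν j with hw
    set r : Fin m → ℝ := fun i => lam * μ i with hr
    set s : Fin n → ℝ := fun j => lam * (t⁻¹ * ν j) with hs
    have hwnn : ∀ i j, 0 ≤ w i j := fun i j =>
      mul_nonneg (mul_nonneg (abs_nonneg _) (le_of_lt (hμ i))) (le_of_lt (hν j))
    have hHall : ∀ (E : Finset (Fin m)) (F : Finset (Fin n)), F ⊆ Finset.univ →
        ∑ i ∈ E, ∑ j ∈ F, w i j ≤ ∑ i ∈ E, r i + ∑ j ∈ F, s j := by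
      intro E F _
      have hrnn : 0 ≤ ∑ i ∈ E, r i :=
        Finset.sum_nonneg fun i _ => mul_nonneg hlam0 (le_of_lt (hμ i))
      have hsnn : 0 ≤ ∑ j ∈ F, s j :=
        Finset.sum_nonneg fun j _ => mul_nonneg hlam0
          (mul_nonneg (inv_nonneg.mpr (le_of_lt ht)) (le_of_lt (hν j)))
      rcases E.eq_empty_or_nonempty with rfl | hE
      · simp only [Finset.sum_empty]
        linarith
      rcases F.eq_empty_or_nonempty with rfl | hF
      · simp only [Finset.sum_empty, Finset.sum_const_zero]
        linarith
      · have h1 := hrect E F hE hF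
        have h2 : max (∑ i ∈ E, μ i) (t⁻¹ * ∑ j ∈ F, ν j) * lam ≤
            (∑ i ∈ E, μ i) * lam + (t⁻¹ * ∑ j ∈ F, ν j) * lam := by
          have hmax : max (∑ i ∈ E, μ i) (t⁻¹ * ∑ j ∈ F, ν j) ≤
              (∑ i ∈ E, μ i) + (t⁻¹ * ∑ j ∈ F, ν j) := by
            have hμE : 0 ≤ ∑ i ∈ E, μ i :=
              Finset.sum_nonneg fun i _ => le_of_lt (hμ i)
            have hνF : 0 ≤ t⁻¹ * ∑ j ∈ F, ν j :=
              mul_nonneg (inv_nonneg.mpr (le_of_lt ht))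
                (Finset.sum_nonneg fun j _ => le_of_lt (hν j))
            exact max_le (by linarith) (by linarith)
          have := mul_le_mul_of_nonneg_right hmax hlam0
          linarith
        have h3 : ∑ i ∈ E, r i = (∑ i ∈ E, μ i) * lam := by
          rw [Finset.sum_mul]
          exact Finset.sum_congr rfl fun i _ => by rw [hr]; ring
        have h4 : ∑ j ∈ F, s j = (t⁻¹ * ∑ j ∈ F, ν j) * lam := by
          rw [Finset.mul_sum, Finset.sum_mul]
          exact Finset.sum_congr rfl fun j _ => by rw [hs]; ring
        rw [h3, h4]
        exact le_trans h1 (le_trans h2 (le_refl _))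
    obtain ⟨x, hxb, hxrow, hxcol⟩ := flow_feasible Finset.univ w s hwnn r hHall
    -- build the decomposition
    set b : Fin m × Fin n → ℝ :=
      fun p => Real.sign (k p) * (x p.1 p.2 / (μ p.1 * ν p.2)) with hbdef
    set c : Fin m × Fin n → ℝ := fun p => k p - b p with hcdef
    have hbc : k = b + c := by
      funext p
      simp only [hcdef, Pi.add_apply]
      ring
    have hμν : ∀ (i : Fin m) (j : Fin n), 0 < μ i * ν j :=
      fun i j => mul_pos (hμ i) (hν j)
    have hweq : ∀ (i : Fin m) (j : Fin n), w i j = |k (i, j)| * μ i * ν j := by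
      intro i j; rw [hw]
    have hxw0 : ∀ i j, k (i, j) = 0 → x i j = 0 := by
      intro i j h0
      have h1 := (hxb i j).2
      have h2 : w i j = 0 := by rw [hweq]; simp [h0]
      have h3 := (hxb i j).1
      rw [h2] at h1
      linarith
    have habsb : ∀ (i : Fin m) (j : Fin n), |b (i, j)| = x i j / (μ i * ν j) := by
      intro i j
      have hxnn : 0 ≤ x i j / (μ i * ν j) :=
        div_nonneg (hxb i j).1 (le_of_lt (hμν i j))
      rcases eq_or_ne (k (i, j)) 0 with h0 | h0
      · rw [hbdef]
        simp only [h0, Real.sign_zero, zero_mul, abs_zero]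
        rw [hxw0 i j h0, zero_div]
      · rw [hbdef]
        simp only []
        rw [abs_mul]
        rcases Real.sign_apply_eq_of_ne_zero _ h0 with hs1 | hs1 <;>
          rw [hs1] <;> simp [abs_of_nonneg hxnn]
    have habsc : ∀ (i : Fin m) (j : Fin n), |c (i, j)| = (w i j - x i j) / (μ i * ν j) := by
      intro i j
      rcases eq_or_ne (k (i, j)) 0 with h0 | h0
      · have hx0 := hxw0 i j h0
        have hw0 : w i j = 0 := by rw [hweq]; simp [h0]
        have hb0 : b (i, j) = 0 := by
          rw [hbdef]; simp [h0, Real.sign_zero]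
        rw [hcdef]
        simp only [h0, hb0, sub_zero, abs_zero, hw0, hx0]
        norm_num
      · have hkabs : Real.sign (k (i, j)) * |k (i, j)| = k (i, j) := by
          rcases lt_trichotomy (k (i, j)) 0 with hlt | heq | hgt
          · rw [Real.sign_of_neg hlt, abs_of_neg hlt]; ring
          · exact absurd heq h0
          · rw [Real.sign_of_pos hgt, abs_of_pos hgt]; ring
        have hceq : c (i, j) = Real.sign (k (i, j)) * (|k (i, j)| - x i j / (μ i * ν j)) := by
          simp only [hcdef, hbdef]
          rw [mul_sub, hkabs]
        have hxle : x i j ≤ |k (i, j)| * (μ i * ν j) := by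
          have h1 := (hxb i j).2
          rw [hweq, mul_assoc] at h1
          exact h1
        have hnn : 0 ≤ |k (i, j)| - x i j / (μ i * ν j) := by
          rw [sub_nonneg, div_le_iff₀ (hμν i j)]
          exact hxle
        have h2 : |c (i, j)| = |k (i, j)| - x i j / (μ i * ν j) := by
          rw [hceq, abs_mul]
          rcases Real.sign_apply_eq_of_ne_zero _ h0 with hs1 | hs1 <;>
            rw [hs1] <;> simp [abs_of_nonneg hnn]
        rw [h2, hweq, sub_div]
        congr 1
        rw [mul_assoc, mul_div_assoc, div_self (ne_of_gt (hμν i j)), mul_one]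
    -- row bound
    have hMble : (⨆ i : Fin m, ∑ j : Fin n, |b (i, j)| * ν j) ≤ lam := by
      refine ciSup_le fun i => ?_
      have h1 : ∀ j : Fin n, |b (i, j)| * ν j = x i j / μ i := by
        intro j
        rw [habsb i j, div_mul_eq_mul_div, mul_div_mul_right _ _ (ne_of_gt (hν j))]
      calc ∑ j : Fin n, |b (i, j)| * ν j = ∑ j : Fin n, x i j / μ i :=
            Finset.sum_congr rfl fun j _ => h1 j
        _ = (∑ j : Fin n, x i j) / μ i := by rw [Finset.sum_div]
        _ ≤ (lam * μ i) / μ i := by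
            have h2 := hxrow i
            simp only [hr] at h2
            gcongr
            first
            | exact (hμ i).le
            | exact hμ i
        _ = lam := by
            rw [mul_div_assoc, div_self (ne_of_gt (hμ i)), mul_one]
    -- column bound
    have hMcle : (⨆ j : Fin n, ∑ i : Fin m, |c (i, j)| * μ i) ≤ lam * t⁻¹ := by
      refine ciSup_le fun j => ?_
      have h1 : ∀ i : Fin m, |c (i, j)| * μ i = (w i j - x i j) / ν j := by
        intro i
        rw [habsc i j, div_mul_eq_mul_div, mul_comm (μ i) (ν j),
          mul_div_mul_right _ _ (ne_of_gt (hμ i))]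
      calc ∑ i : Fin m, |c (i, j)| * μ i = ∑ i : Fin m, (w i j - x i j) / ν j :=
            Finset.sum_congr rfl fun i _ => h1 i
        _ = (∑ i : Fin m, (w i j - x i j)) / ν j := by rw [Finset.sum_div]
        _ ≤ (lam * (t⁻¹ * ν j)) / ν j := by
            have h2 := hxcol j (Finset.mem_univ j)
            simp only [hs] at h2
            gcongr
            first
            | exact (hν j).le
            | exact hν j
        _ = lam * t⁻¹ := by
            rw [mul_div_assoc, mul_div_assoc, div_self (ne_of_gt (hν j)), mul_one]
    have hmemA : ((⨆ i : Fin m, ∑ j : Fin n, |b (i, j)| * ν j) +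
        t * ⨆ j : Fin n, ∑ i : Fin m, |c (i, j)| * μ i) ∈ A := ⟨b, c, hbc, rfl⟩
    have hAbdd : BddBelow A := by
      refine ⟨0, ?_⟩
      rintro a ⟨b', c', _, rfl⟩
      have h1 : 0 ≤ ⨆ i : Fin m, ∑ j : Fin n, |b' (i, j)| * ν j := by
        set i1 : Fin m := Classical.arbitrary _ with hi1
        refine le_trans (Finset.sum_nonneg fun j (_ : j ∈ Finset.univ) =>
          mul_nonneg (abs_nonneg (b' (i1, j))) (le_of_lt (hν j))) ?_
        exact le_ciSup (f := fun i : Fin m => ∑ j : Fin n, |b' (i, j)| * ν j) (hbddm _) i1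
      have h2 : 0 ≤ ⨆ j : Fin n, ∑ i : Fin m, |c' (i, j)| * μ i := by
        set j1 : Fin n := Classical.arbitrary _ with hj1
        refine le_trans (Finset.sum_nonneg fun i (_ : i ∈ Finset.univ) =>
          mul_nonneg (abs_nonneg (c' (i, j1))) (le_of_lt (hμ i))) ?_
        exact le_ciSup (f := fun j : Fin n => ∑ i : Fin m, |c' (i, j)| * μ i) (hbddn _) j1
      exact add_nonneg h1 (mul_nonneg (le_of_lt ht) h2)
    have h5 := csInf_le hAbdd hmemA
    have h7 : t * (⨆ j : Fin n, ∑ i : Fin m, |c (i, j)| * μ i) ≤ t * (lam * t⁻¹) :=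
      mul_le_mul_of_nonneg_left hMcle (le_of_lt ht)
    have h8 : t * (lam * t⁻¹) = lam := by field_simp
    linarith
  · -- easy direction
    refine le_csInf hAne ?_
    rintro a ⟨b, c, hbc, rfl⟩
    exact csSup_le hBne (hBle b c hbc)
end

section
/- (Special case m = 1 of the splitting lemma.) Let N = Fin n with positive weights ν_j > 0, let μ₁ > 0, t > 0, and a : Fin n → ℝ with |a(1)| ≥ |a(2)| ≥ … ≥ |a(n)|. Assume that for all nonempty F ⊆ N: (μ₁ ∨ t⁻¹ν(F))⁻¹ μ₁ ∑_{j∈F} |a(j)| ν_j ≤ 1. Let k be the largest index in {0,…,n} with t⁻¹ν({1,…,k}) ≤ μ₁ (k = n if t⁻¹ν(N) ≤ μ₁). Then ∑_{j≤k} |a(j)| ν_j ≤ 1 and |a(j)| μ₁ ≤ 1/t for all j > k. -/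
open Finset

/-- base case `m = 1` of the splitting lemma: if `|a|` is
nonincreasing, `(μ₁ ∨ t⁻¹ν(F))⁻¹ μ₁ ∑_{j∈F} |a(j)| ν_j ≤ 1` for all nonempty `F`,
and `k` is the largest index with `t⁻¹ν({1,…,k}) ≤ μ₁`, then
`∑_{j≤k} |a(j)| ν_j ≤ 1` and `|a(j)| μ₁ ≤ 1/t` for `j > k`. -/
theorem splitting_base_case (n : ℕ) (ν : Fin n → ℝ) (hν : ∀ j, 0 < ν j)
    (μ₁ : ℝ) (hμ₁ : 0 < μ₁) (t : ℝ) (ht : 0 < t) (a : Fin n → ℝ)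
    (hmono : ∀ i j : Fin n, i ≤ j → |a j| ≤ |a i|)
    (ha : ∀ F : Finset (Fin n), F.Nonempty →
      (max μ₁ (t⁻¹ * ∑ j ∈ F, ν j))⁻¹ * (μ₁ * ∑ j ∈ F, |a j| * ν j) ≤ 1)
    (k : ℕ) (hk : k ≤ n)
    (hk1 : t⁻¹ * ∑ j ∈ Finset.univ.filter (fun j : Fin n => (j : ℕ) < k), ν j ≤ μ₁)
    (hk2 : k < n → μ₁ <
      t⁻¹ * ∑ j ∈ Finset.univ.filter (fun j : Fin n => (j : ℕ) < k + 1), ν j) :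
    (∑ j ∈ Finset.univ.filter (fun j : Fin n => (j : ℕ) < k), |a j| * ν j ≤ 1) ∧
    (∀ j : Fin n, k ≤ (j : ℕ) → |a j| * μ₁ ≤ 1 / t) := by
  constructor
  · set F := Finset.univ.filter (fun j : Fin n => (j : ℕ) < k) with hF
    rcases F.eq_empty_or_nonempty with h | hne
    · rw [h]; simp
    · have h1 := ha F hne
      rw [max_eq_left hk1] at h1
      have h2 : μ₁⁻¹ * (μ₁ * ∑ j ∈ F, |a j| * ν j) = ∑ j ∈ F, |a j| * ν j := by
        field_simp
      rw [h2] at h1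
      exact h1
  · intro j hj
    have hkn : k < n := lt_of_le_of_lt hj j.isLt
    set F := Finset.univ.filter (fun j : Fin n => (j : ℕ) < k + 1) with hF
    have hne : F.Nonempty := ⟨⟨k, hkn⟩, by simp [hF]⟩
    have hS : (0 : ℝ) < ∑ i ∈ F, ν i := Finset.sum_pos (fun i _ => hν i) hne
    have hlt := hk2 hkn
    have h1 := ha F hne
    rw [max_eq_right (le_of_lt hlt)] at h1
    have hlow : |a j| * ∑ i ∈ F, ν i ≤ ∑ i ∈ F, |a i| * ν i := by
      rw [Finset.mul_sum]
      refine Finset.sum_le_sum fun i hi => ?_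
      have hik : (i : ℕ) < k + 1 := by simpa [hF] using hi
      have : i ≤ j := by
        have : (i : ℕ) ≤ (j : ℕ) := le_trans (Nat.lt_succ_iff.mp hik) hj
        exact this
      exact mul_le_mul_of_nonneg_right (hmono i j this) (le_of_lt (hν i))
    have h2 : (t⁻¹ * ∑ i ∈ F, ν i)⁻¹ * (μ₁ * (|a j| * ∑ i ∈ F, ν i)) ≤ 1 := by
      refine le_trans ?_ h1
      have hpos : (0:ℝ) < (t⁻¹ * ∑ i ∈ F, ν i)⁻¹ := by positivity
      exact mul_le_mul_of_nonneg_left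
        (mul_le_mul_of_nonneg_left hlow (le_of_lt hμ₁)) (le_of_lt hpos)
    have h3 : t * (μ₁ * |a j|) ≤ 1 := by
      have : (t⁻¹ * ∑ i ∈ F, ν i)⁻¹ * (μ₁ * (|a j| * ∑ i ∈ F, ν i))
          = t * (μ₁ * |a j|) := by
        field_simp
      rwa [this] at h2
    rw [le_div_iff₀ ht]
    nlinarith
end
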